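/- arXiv:1810.01947 — 9 statements merged into one kernel-verified Lean document; each statement's English description precedes it below -/
import Mathlib

section
/- Let X be a set and 𝒜 a family of subsets of X. Then the following are equivalent: (i) for every finite partition of X there is a part S and some A ∈ 𝒜 with A ⊆ S; (ii) there exists an ultrafilter u on X such that every S ∈ u contains some A ∈ 𝒜 as a subset. -/
/-- For a set `X` and a family `𝒜` of subsets of `X`, the following are
equivalent: (i) every finite partition of `X` has a part containing some
member of `𝒜`; (ii) there is an ultrafilter `u` on `X` such that every
`S ∈ u` contains some member of `𝒜`. -/
theorem stmt_0 (X : Type) (𝒜 : Set (Set X)) :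
    (∀ (n : ℕ) (P : Fin n → Set X),
        (Pairwise fun i j => Disjoint (P i) (P j)) → (⋃ i, P i) = Set.univ →
        ∃ i, ∃ A ∈ 𝒜, A ⊆ P i) ↔
      ∃ u : Ultrafilter X, ∀ S ∈ u, ∃ A ∈ 𝒜, A ⊆ S := by
  classical
  constructor
  · intro h
    -- the family of complements of "bad" sets
    set g : Set (Set X) := {c | ∃ S : Set X, (¬ ∃ A ∈ 𝒜, A ⊆ S) ∧ c = Sᶜ} with hg
    have hproper : (Filter.generate g).NeBot := by
      rw [Filter.generate_neBot_iff]
      intro t hts htfin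
      by_contra hempty
      rw [Set.not_nonempty_iff_eq_empty] at hempty
      -- enumerate t
      obtain ⟨n, f, hf⟩ := htfin.fin_embedding
      set S : Fin n → Set X := fun i => ((f i : Set X))ᶜ with hS
      have hSbad : ∀ i, ¬ ∃ A ∈ 𝒜, A ⊆ S i := by
        intro i
        have : (f i : Set X) ∈ g := hts (by rw [← hf]; exact Set.mem_range_self i)
        obtain ⟨T, hT, hTe⟩ := this
        simpa [hS, hTe] using hT
      -- cover: every x is in some S i
      have hcover : ∀ x : X, ∃ i, x ∈ S i := by
        intro x
        by_contra hx
        push_neg at hx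
        have : x ∈ ⋂₀ t := by
          intro c hc
          rw [← hf] at hc
          obtain ⟨i, rfl⟩ := hc
          have := hx i
          simpa [hS] using this
        simp [hempty] at this
      -- partition by first index
      set P : Fin n → Set X := fun i => S i \ ⋃ j, ⋃ (_ : j < i), S j with hP
      have hdisj : Pairwise fun i j => Disjoint (P i) (P j) := by
        intro i j hij
        rcases hij.lt_or_gt with hlt | hlt
        · refine Set.disjoint_left.2 fun x hxi hxj => ?_
          exact hxj.2 (Set.mem_iUnion.2 ⟨i, Set.mem_iUnion.2 ⟨hlt, hxi.1⟩⟩)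
        · refine Set.disjoint_left.2 fun x hxi hxj => ?_
          exact hxi.2 (Set.mem_iUnion.2 ⟨j, Set.mem_iUnion.2 ⟨hlt, hxj.1⟩⟩)
      have huniv : (⋃ i, P i) = Set.univ := by
        ext x
        simp only [Set.mem_univ, iff_true, Set.mem_iUnion]
        have hne : (Finset.univ.filter (fun i => x ∈ S i)).Nonempty := by
          obtain ⟨i, hi⟩ := hcover x
          exact ⟨i, by simp [hi]⟩
        set i := (Finset.univ.filter (fun i => x ∈ S i)).min' hne with hi
        have hxi : x ∈ S i := by
          have := (Finset.univ.filter (fun i => x ∈ S i)).min'_mem hne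
          simpa using this
        refine ⟨i, hxi, ?_⟩
        intro hmem
        rw [Set.mem_iUnion] at hmem
        obtain ⟨j, hj⟩ := hmem
        rw [Set.mem_iUnion] at hj
        obtain ⟨hji, hxj⟩ := hj
        have : i ≤ j := Finset.min'_le _ j (by simp [hxj])
        exact absurd hji (not_lt.2 this)
      obtain ⟨i, A, hA, hAsub⟩ := h n P hdisj huniv
      exact hSbad i ⟨A, hA, hAsub.trans Set.diff_subset⟩
    -- extend to an ultrafilter
    refine ⟨@Ultrafilter.of X (Filter.generate g) hproper, ?_⟩
    intro T hT
    by_contra hbad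
    have hc : Tᶜ ∈ Filter.generate g := Filter.mem_generate_of_mem ⟨T, hbad, rfl⟩
    have : Tᶜ ∈ @Ultrafilter.of X (Filter.generate g) hproper :=
      (@Ultrafilter.of_le X (Filter.generate g) hproper) hc
    exact absurd hT ((Ultrafilter.compl_mem_iff_notMem).1 this)
  · rintro ⟨u, hu⟩ n P _ huniv
    have : (⋃ i, P i) ∈ u := by rw [huniv]; exact Filter.univ_mem
    obtain ⟨i, -, hi⟩ := (Ultrafilter.finite_biUnion_mem_iff Set.finite_univ).1
      (by simpa [Set.biUnion_univ] using this)
    obtain ⟨A, hA, hAsub⟩ := hu (P i) hi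
    exact ⟨i, A, hA, hAsub⟩
end

section
/- (Hindman's Finite Sums Theorem) For every finite coloring of the positive natural numbers there exist a color class A and an injective infinite sequence x₀, x₁, … of positive naturals such that every finite sum Σ_{i∈F} xᵢ over a nonempty finite set F of indices belongs to A. -/
open Hindman

private lemma fs_map_aux {M N} [AddSemigroup M] [AddSemigroup N] (f : M → N)
    (hf : ∀ a b, f (a + b) = f a + f b) :
    ∀ (b : Stream' N) (n : N), n ∈ Hindman.FS b → ∀ a : Stream' M, b = a.map f →
      ∃ m ∈ Hindman.FS a, f m = n := by
  intro b n hn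
  induction hn with
  | head' b =>
    rintro a rfl
    exact ⟨a.head, FS.head a, (Stream'.head_map f a).symm⟩
  | tail' b m h ih =>
    rintro a rfl
    obtain ⟨m', hm', rfl⟩ := ih a.tail (Stream'.tail_map f a)
    exact ⟨m', FS.tail a m' hm', rfl⟩
  | cons' b m h ih =>
    rintro a rfl
    obtain ⟨m', hm', rfl⟩ := ih a.tail (Stream'.tail_map f a)
    exact ⟨a.head + m', FS.cons a m' hm', by rw [hf, Stream'.head_map]⟩

/-- Hindman's Finite Sums Theorem: for every finite coloring of the positive
natural numbers there are a color `i` and an injective infinite sequence of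
positive naturals all of whose finite nonempty subset sums have color `i`. -/
theorem stmt_4 (k : ℕ) (c : ℕ → Fin k) :
    ∃ (i : Fin k) (x : ℕ → ℕ), (∀ j, 0 < x j) ∧ Function.Injective x ∧
      ∀ F : Finset ℕ, F.Nonempty → c (∑ j ∈ F, x j) = i := by
  rcases Nat.eq_zero_or_pos k with rfl | hk
  · exact (c 1).elim0
  -- apply weak Hindman to ℕ+
  obtain ⟨C, ⟨i, rfl⟩, a, hFS⟩ :=
    Hindman.exists_FS_of_finite_cover (M := ℕ+)
      (Set.range fun i : Fin k => {n : ℕ+ | c n = i}) (Set.finite_range _)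
      (fun n _ => ⟨_, ⟨c n, rfl⟩, rfl⟩)
  -- the ℕ-valued stream
  set b : Stream' ℕ := a.map (fun p : ℕ+ => (p : ℕ)) with hb
  have hbpos : ∀ j, 0 < b.get j := fun j => (a.get j).pos
  have hcol : ∀ F : Finset ℕ, F.Nonempty → c (∑ j ∈ F, b.get j) = i := by
    intro F hF
    have hmem : (∑ j ∈ F, b.get j) ∈ Hindman.FS b := Hindman.FS.finset_sum b F hF
    obtain ⟨m, hm, hfm⟩ := fs_map_aux (fun p : ℕ+ => (p : ℕ))
      (fun x y => rfl) b _ hmem a rfl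
    rw [← hfm]
    exact hFS hm
  -- block construction
  let g : ℕ → ℕ × ℕ := fun n => Nat.rec (0, 1)
    (fun _ p => (p.1 + p.2, (∑ j ∈ Finset.Ico p.1 (p.1 + p.2), b.get j) + 1)) n
  set t : ℕ → ℕ := fun n => (g n).1 with ht
  set L : ℕ → ℕ := fun n => (g n).2 with hL
  set x : ℕ → ℕ := fun n => ∑ j ∈ Finset.Ico (t n) (t n + L n), b.get j with hx
  have htsucc : ∀ n, t (n + 1) = t n + L n := fun n => rfl
  have hLsucc : ∀ n, L (n + 1) = x n + 1 := fun n => rfl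
  have hLpos : ∀ n, 0 < L n := by
    intro n; cases n with
    | zero => exact Nat.one_pos
    | succ n => rw [hLsucc]; omega
  have hxL : ∀ n, L n ≤ x n := by
    intro n
    calc L n = ∑ _j ∈ Finset.Ico (t n) (t n + L n), 1 := by
          rw [Finset.sum_const, Nat.card_Ico, smul_eq_mul, mul_one]; omega
      _ ≤ x n := Finset.sum_le_sum fun j _ => hbpos j
  have hxpos : ∀ n, 0 < x n := fun n => lt_of_lt_of_le (hLpos n) (hxL n)
  have hmono : StrictMono x := strictMono_nat_of_lt_succ fun n => by
    have := hxL (n + 1)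
    rw [hLsucc] at this; omega
  have htmono : Monotone t := monotone_nat_of_le_succ fun n => by
    rw [htsucc]; omega
  refine ⟨i, x, hxpos, hmono.injective, ?_⟩
  intro F hF
  have hdisj : (F : Set ℕ).PairwiseDisjoint
      (fun n => Finset.Ico (t n) (t n + L n)) := by
    intro m _ n _ hmn
    rcases hmn.lt_or_gt with h | h
    · apply Finset.disjoint_left.2
      intro j hj hj'
      simp only [Finset.mem_Ico] at hj hj'
      have h1 : t m + L m ≤ t n := htsucc m ▸ htmono h
      omega
    · apply Finset.disjoint_left.2
      intro j hj hj'
      simp only [Finset.mem_Ico] at hj hj'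
      have h1 : t n + L n ≤ t m := htsucc n ▸ htmono h
      omega
  have hsum : ∑ n ∈ F, x n
      = ∑ j ∈ F.biUnion (fun n => Finset.Ico (t n) (t n + L n)), b.get j :=
    (Finset.sum_biUnion hdisj).symm
  rw [hsum]
  apply hcol
  obtain ⟨n, hn⟩ := hF
  refine ⟨t n, Finset.mem_biUnion.2 ⟨n, hn, ?_⟩⟩
  simp [Finset.mem_Ico, hLpos n]
end

section
/- If (X, ·) is an infinite semigroup that is weakly left cancellative, then (βX, ·) has a free (non-principal) idempotent ultrafilter. -/
/-- The ultrafilter extension of the semigroup operation: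
`A ∈ umul u v ↔ {x : {y : x·y ∈ A} ∈ v} ∈ u`. -/
def umul {X : Type} [Mul X] (u v : Ultrafilter X) : Ultrafilter X :=
  u.bind fun x => v.map fun y => x * y

lemma mem_umul {X : Type} [Mul X] (u v : Ultrafilter X) (A : Set X) :
    A ∈ umul u v ↔ {x : X | {y : X | x * y ∈ A} ∈ v} ∈ u := Iff.rfl

attribute [local instance] Ultrafilter.mul Ultrafilter.semigroup

lemma umul_eq {X : Type} [Semigroup X] (u v : Ultrafilter X) : umul u v = u * v := by
  refine Ultrafilter.coe_inj.mp (Filter.ext fun A => ?_)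
  rw [show (A ∈ (↑(u * v) : Filter X)) ↔ (∀ᶠ m in ↑(u * v), m ∈ A) from Iff.rfl,
    Ultrafilter.eventually_mul]
  rfl

/-- If `X` is an infinite weakly left cancellative semigroup (each equation
`a·x = b` has only finitely many solutions), then `βX` has a free
(non-principal) idempotent ultrafilter. -/
theorem stmt_7 (X : Type) [Semigroup X] [Infinite X]
    (hwlc : ∀ a b : X, {x : X | a * x = b}.Finite) :
    ∃ u : Ultrafilter X, umul u u = u ∧ ∀ x : X, u ≠ pure x := by
  set s : Set (Ultrafilter X) :=
    {u : Ultrafilter X | ∀ A : Set X, A.Finite → Aᶜ ∈ u} with hs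
  have hclosed : IsClosed s := by
    have : s = ⋂ (A : {A : Set X // A.Finite}), {u : Ultrafilter X | (A : Set X)ᶜ ∈ u} := by
      ext u
      simp only [hs, Set.mem_iInter, Set.mem_setOf_eq, Subtype.forall]
    rw [this]
    exact isClosed_iInter fun A => ultrafilter_isClosed_basic _
  have hnemp : s.Nonempty := by
    refine ⟨Filter.hyperfilter X, fun A hA => ?_⟩
    exact Filter.hyperfilter_le_cofinite hA.compl_mem_cofinite
  have hmul : ∀ u ∈ s, ∀ v ∈ s, u * v ∈ s := by
    intro u hu v hv A hA
    by_contra h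
    rw [← Ultrafilter.compl_notMem_iff, compl_compl] at h
    rw [← umul_eq, mem_umul] at h
    have : {x : X | {y : X | x * y ∈ A} ∈ v} = ∅ := by
      ext x
      simp only [Set.mem_setOf_eq, Set.mem_empty_iff_false, iff_false]
      intro hxA
      have hfin : {y : X | x * y ∈ A}.Finite := by
        have : {y : X | x * y ∈ A} ⊆ ⋃ b ∈ A, {y : X | x * y = b} := by
          intro y hy; exact Set.mem_biUnion hy rfl
        exact (hA.biUnion fun b _ => hwlc x b).subset this
      exact (Ultrafilter.compl_mem_iff_notMem.mp (hv _ hfin)) hxA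
    rw [this] at h
    exact h Ultrafilter.empty_notMem
  obtain ⟨m, hm, hmm⟩ := exists_idempotent_in_compact_subsemigroup
    Ultrafilter.continuous_mul_left s hnemp hclosed.isCompact hmul
  exact ⟨m, by rw [umul_eq]; exact hmm, fun x hx => by
    have := hm {x} (Set.finite_singleton x)
    rw [hx] at this
    exact this rfl⟩
end

section
/- (Galvin's observation) Let (X, ·) be a semigroup and u a free idempotent ultrafilter in (βX, ·). Then for every S ∈ u there is an injective sequence (xᵢ)_{i<ω} of elements of S such that every finite product x_{i₀}·x_{i₁}·…·x_{iₙ} with i₀ < i₁ < … < iₙ belongs to S. -/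
/-- The product `a * b₁ * ⋯ * bₖ` of a nonempty list of semigroup elements. -/
def listProd {X : Type} [Mul X] : X → List X → X
  | a, [] => a
  | a, b :: l => listProd (a * b) l

theorem mem_umul_iff {X : Type} [Mul X] {u v : Ultrafilter X} {A : Set X} :
    A ∈ umul u v ↔ {x | {y | x * y ∈ A} ∈ v} ∈ u := by
  change A ∈ Filter.bind (↑u) (fun x => ↑(Ultrafilter.map (fun y => x * y) v)) ↔ _
  rw [Filter.mem_bind']
  simp only [Ultrafilter.mem_coe, Ultrafilter.mem_map]
  rfl

theorem listProd_mul {X : Type} [Semigroup X] (l : List X) (a b : X) :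
    listProd (a * b) l = a * listProd b l := by
  induction l generalizing b with
  | nil => rfl
  | cons c l ih =>
    show listProd ((a * b) * c) l = a * listProd (b * c) l
    rw [mul_assoc, ih]

/-- Pick an element of `E` avoiding the list `xs` (if possible). -/
noncomputable def pickEl {X : Type} [Nonempty X] (E : Set X) (xs : List X) : X :=
  Classical.epsilon fun a => a ∈ E ∧ a ∉ xs

theorem pickEl_spec {X : Type} [Nonempty X] {E : Set X} {xs : List X}
    (h : ∃ a, a ∈ E ∧ a ∉ xs) : pickEl E xs ∈ E ∧ pickEl E xs ∉ xs :=
  Classical.epsilon_spec h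

/-- Galvin's recursive construction: state = (chosen elements so far, current large set). -/
noncomputable def galvinState {X : Type} [Mul X] [Nonempty X] (S0 : Set X) : ℕ → List X × Set X
  | 0 => ([], S0)
  | n + 1 =>
    ((galvinState S0 n).1 ++ [pickEl (galvinState S0 n).2 (galvinState S0 n).1],
      (galvinState S0 n).2 ∩
        {y | pickEl (galvinState S0 n).2 (galvinState S0 n).1 * y ∈ (galvinState S0 n).2})

/-- Galvin's observation: if `u` is a free idempotent ultrafilter on a
semigroup `X`, then every `S ∈ u` contains all finite products, along
increasing index tuples, of some injective sequence of elements of `S`. -/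
theorem stmt_8 (X : Type) [Semigroup X] (u : Ultrafilter X)
    (hfree : ∀ x : X, u ≠ pure x) (hidem : umul u u = u)
    (S : Set X) (hS : S ∈ u) :
    ∃ x : ℕ → X, Function.Injective x ∧ (∀ i, x i ∈ S) ∧
      ∀ (i : ℕ) (l : List ℕ), (i :: l).Chain' (· < ·) →
        listProd (x i) (l.map x) ∈ S := by
  classical
  haveI : Nonempty X := ⟨(Ultrafilter.nonempty_of_mem hS).some⟩
  -- the "star" operator: A ∈ u implies T A ∈ u by idempotence
  have hT : ∀ A : Set X, A ∈ u → {w | {z | w * z ∈ A} ∈ u} ∈ u := by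
    intro A hA
    have h1 : A ∈ umul u u := by rw [hidem]; exact hA
    exact mem_umul_iff.mp h1
  set Sstar : Set X := S ∩ {w | {z | w * z ∈ S} ∈ u} with hSstar_def
  have hSstar_mem : Sstar ∈ u := Filter.inter_mem hS (hT S hS)
  have hSstar_sub : Sstar ⊆ S := Set.inter_subset_left
  -- the star lemma
  have hstar : ∀ a ∈ Sstar, {y | a * y ∈ Sstar} ∈ u := by
    intro a ha
    have h1 : {y | a * y ∈ S} ∈ u := ha.2
    have h2 : {y | {z | (a * y) * z ∈ S} ∈ u} ∈ u := by
      have h3 := hT {w | a * w ∈ S} h1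
      have : {w | {z | w * z ∈ {w | a * w ∈ S}} ∈ u} =
          {y | {z | (a * y) * z ∈ S} ∈ u} := by
        ext y
        simp only [Set.mem_setOf_eq, mul_assoc]
      rwa [this] at h3
    have : {y | a * y ∈ Sstar} =
        {y | a * y ∈ S} ∩ {y | {z | (a * y) * z ∈ S} ∈ u} := by
      ext y; rfl
    rw [this]
    exact Filter.inter_mem h1 h2
  -- freeness: complements of finite sets are large
  have hcof : ∀ F : Set X, F.Finite → Fᶜ ∈ u := by
    intro F hF
    by_contra h
    have hFu : F ∈ u := (Ultrafilter.compl_notMem_iff).mp h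
    obtain ⟨a, _, ha⟩ := Ultrafilter.eq_pure_of_finite_mem hF hFu
    exact hfree a ha
  -- the pick function works on large sets
  have hpick : ∀ (E : Set X) (xs : List X), E ∈ u →
      pickEl E xs ∈ E ∧ pickEl E xs ∉ xs := by
    intro E xs hE
    have h1 : E ∩ {a | a ∈ xs}ᶜ ∈ u :=
      Filter.inter_mem hE (hcof _ (xs.finite_toSet))
    obtain ⟨a, ha⟩ := Ultrafilter.nonempty_of_mem h1
    exact pickEl_spec ⟨a, ha.1, ha.2⟩
  set st : ℕ → List X × Set X := galvinState Sstar with hst_def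
  set x : ℕ → X := fun n => pickEl (st n).2 (st n).1 with hx_def
  have hsucc2 : ∀ n, (st (n + 1)).2 = (st n).2 ∩ {y | x n * y ∈ (st n).2} := by
    intro n; rfl
  have hsucc1 : ∀ n, (st (n + 1)).1 = (st n).1 ++ [x n] := by
    intro n; rfl
  -- the invariant
  have hInv : ∀ n, (st n).2 ∈ u ∧ (st n).2 ⊆ Sstar ∧
      ∀ a ∈ (st n).2, {y | a * y ∈ (st n).2} ∈ u := by
    intro n
    induction n with
    | zero => exact ⟨hSstar_mem, subset_rfl, hstar⟩
    | succ n ih =>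
      obtain ⟨hmem, hsub, hmul⟩ := ih
      have hx : x n ∈ (st n).2 := (hpick _ _ hmem).1
      rw [hsucc2 n]
      refine ⟨Filter.inter_mem hmem (hmul _ hx), fun y hy => hsub hy.1, ?_⟩
      intro b hb
      have h1 : {y | b * y ∈ (st n).2} ∈ u := hmul b hb.1
      have h2 : {y | (x n * b) * y ∈ (st n).2} ∈ u := hmul _ hb.2
      have heq : {y | b * y ∈ (st n).2 ∩ {y | x n * y ∈ (st n).2}} =
          {y | b * y ∈ (st n).2} ∩ {y | (x n * b) * y ∈ (st n).2} := by
        ext y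
        simp only [Set.mem_inter_iff, Set.mem_setOf_eq, mul_assoc]
      rw [heq]
      exact Filter.inter_mem h1 h2
  have hxmem : ∀ n, x n ∈ (st n).2 := fun n => (hpick _ _ (hInv n).1).1
  have hxnotmem : ∀ n, x n ∉ (st n).1 := fun n => (hpick _ _ (hInv n).1).2
  have hlist : ∀ n, (st n).1 = (List.range n).map x := by
    intro n
    induction n with
    | zero => rfl
    | succ n ih => rw [hsucc1 n, ih, List.range_succ, List.map_append]; rfl
  -- injectivity
  have hne : ∀ m n, m < n → x m ≠ x n := by
    intro m n hmn h
    apply hxnotmem n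
    rw [hlist n, ← h]
    exact List.mem_map_of_mem (f := x) (List.mem_range.mpr hmn)
  have hinj : Function.Injective x := by
    intro a b hab
    rcases lt_trichotomy a b with h | h | h
    · exact absurd hab (hne a b h)
    · exact h
    · exact absurd hab.symm (hne b a h)
  -- monotonicity of the sets
  have hmono : ∀ n m, n ≤ m → (st m).2 ⊆ (st n).2 := by
    intro n m hnm
    induction m with
    | zero => rw [Nat.le_zero.mp hnm]
    | succ m ih =>
      rcases Nat.lt_or_ge n (m + 1) with h | h
      · have := ih (Nat.lt_succ_iff.mp h)
        intro y hy
        exact this ((hsucc2 m ▸ hy).1)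
      · rw [Nat.le_antisymm hnm h]
  have hstep : ∀ n y, y ∈ (st (n + 1)).2 → x n * y ∈ (st n).2 := by
    intro n y hy
    exact (hsucc2 n ▸ hy).2
  -- the chain lemma
  have hchain : ∀ (l : List ℕ) (i : ℕ), (i :: l).Chain' (· < ·) →
      listProd (x i) (l.map x) ∈ (st i).2 := by
    intro l
    induction l with
    | nil => intro i _; exact hxmem i
    | cons j l ih =>
      intro i hc
      have hij : i < j := (List.isChain_cons_cons.mp hc).1
      have hjl : (j :: l).Chain' (· < ·) := (List.isChain_cons_cons.mp hc).2
      have hp : listProd (x j) (l.map x) ∈ (st j).2 := ih j hjl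
      have hp' : listProd (x j) (l.map x) ∈ (st (i + 1)).2 := hmono (i + 1) j hij hp
      have hres := hstep i _ hp'
      show listProd (x i) (x j :: l.map x) ∈ (st i).2
      show listProd (x i * x j) (l.map x) ∈ (st i).2
      rw [listProd_mul]
      exact hres
  refine ⟨x, hinj, fun i => hSstar_sub ((hInv i).2.1 (hxmem i)), ?_⟩
  intro i l hc
  exact hSstar_sub ((hInv i).2.1 (hchain l i hc))
end

section
/- (Finite Products Theorem) Let (X, ·) be an infinite semigroup which is either idempotent-free or weakly left cancellative. Then for every finite coloring of X there exist a color class A and an injective infinite sequence x₀, x₁, … in X such that every finite product x_{i₀}·…·x_{iₙ} with i₀ < … < iₙ belongs to A. -/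
open Filter

attribute [local instance] Ultrafilter.mul Ultrafilter.semigroup

namespace FPaux

theorem listProd_cons {X : Type} [Semigroup X] (a b : X) (l : List X) :
    listProd (a * b) l = a * listProd b l := by
  induction l generalizing b with
  | nil => rfl
  | cons c t ih =>
    show listProd (a * b * c) t = a * listProd (b * c) t
    rw [mul_assoc, ih]

variable {X : Type} [Semigroup X]

theorem mem_mul {U V : Ultrafilter X} {s : Set X} :
    s ∈ U * V ↔ {a | {b | a * b ∈ s} ∈ V} ∈ U := Iff.rfl

/-- The "star" operation of the Galvin–Glazer argument. -/
def star (U : Ultrafilter X) (s : Set X) : Set X :=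
  {a | a ∈ s ∧ {b | a * b ∈ s} ∈ U}

theorem star_subset (U : Ultrafilter X) (s : Set X) : star U s ⊆ s := fun _ ha => ha.1

theorem star_mem {U : Ultrafilter X} (hU : U * U = U) {s : Set X} (hs : s ∈ U) :
    star U s ∈ U := by
  have h2 : s ∈ U * U := by rw [hU]; exact hs
  rw [mem_mul] at h2
  exact U.toFilter.inter_mem hs h2

theorem star_star {U : Ultrafilter X} (hU : U * U = U) {s : Set X} {a : X}
    (ha : a ∈ star U s) : {b | a * b ∈ star U s} ∈ U := by
  have ht : {b | a * b ∈ s} ∈ U := ha.2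
  have h2 := star_mem hU ht
  refine U.toFilter.mem_of_superset h2 ?_
  rintro b ⟨hb1, hb2⟩
  refine ⟨hb1, ?_⟩
  have : {c | b * c ∈ {b | a * b ∈ s}} = {c | a * b * c ∈ s} := by
    ext c; simp [Set.mem_setOf_eq, mul_assoc]
  rw [this] at hb2
  exact hb2

open scoped Classical in
noncomputable def pickEl [Nonempty X] (s : Set X) : X :=
  if h : s.Nonempty then h.some else Classical.arbitrary X

theorem pickEl_mem [Nonempty X] {s : Set X} (h : s.Nonempty) : pickEl s ∈ s := by
  classical
  rw [pickEl]
  rw [dif_pos h]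
  exact h.some_mem

variable [Nonempty X]

/-- One step of the Galvin–Glazer construction. -/
noncomputable def step (U : Ultrafilter X) : Set X × List X → Set X × List X :=
  fun p =>
    let a := pickEl (star U p.1 \ {y | y ∈ p.2})
    (star U p.1 ∩ {b | a * b ∈ star U p.1}, a :: p.2)

noncomputable def f (U : Ultrafilter X) (A : Set X) (n : ℕ) : Set X × List X :=
  (step U)^[n] (A, [])

noncomputable def x (U : Ultrafilter X) (A : Set X) (n : ℕ) : X :=
  pickEl (star U (f U A n).1 \ {y | y ∈ (f U A n).2})

theorem f_succ (U : Ultrafilter X) (A : Set X) (n : ℕ) :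
    f U A (n + 1) = (star U (f U A n).1 ∩ {b | x U A n * b ∈ star U (f U A n).1},
      x U A n :: (f U A n).2) := by
  rw [f, Function.iterate_succ_apply']
  rfl

section main

variable {U : Ultrafilter X} (hU : U * U = U) (hinf : ∀ s ∈ U, s.Infinite)
  {A : Set X} (hA : A ∈ U)

include hU hinf hA

theorem f_mem : ∀ n, (f U A n).1 ∈ U := by
  intro n
  induction n with
  | zero => exact hA
  | succ n ih =>
    rw [f_succ]
    have hx : x U A n ∈ star U (f U A n).1 \ {y | y ∈ (f U A n).2} := by
      apply pickEl_mem
      exact ((hinf _ (star_mem hU ih)).diff (List.finite_toSet _)).nonempty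
    exact U.toFilter.inter_mem (star_mem hU ih) (star_star hU hx.1)

theorem x_mem (n : ℕ) :
    x U A n ∈ star U (f U A n).1 \ {y | y ∈ (f U A n).2} := by
  apply pickEl_mem
  exact ((hinf _ (star_mem hU (f_mem hU hinf hA n))).diff (List.finite_toSet _)).nonempty

theorem f_antitone : ∀ {m n : ℕ}, n ≤ m → (f U A m).1 ⊆ (f U A n).1 := by
  intro m
  induction m with
  | zero => intro n hn; rw [Nat.le_zero.mp hn]
  | succ m ih =>
    intro n hn
    rcases Nat.lt_or_ge n (m + 1) with hlt | hge
    · have : (f U A (m + 1)).1 ⊆ (f U A m).1 := by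
        rw [f_succ]
        exact fun a ha => star_subset U _ ha.1
      exact this.trans (ih (Nat.lt_succ_iff.mp hlt))
    · rw [Nat.le_antisymm hn hge]

theorem prod_mem_star : ∀ (l : List ℕ) (j : ℕ), (j :: l).Chain' (· < ·) →
    listProd (x U A j) (l.map (x U A)) ∈ star U (f U A j).1 := by
  intro l
  induction l with
  | nil => intro j _; exact (x_mem hU hinf hA j).1
  | cons i t ih =>
    intro j hchain
    rcases List.isChain_cons_cons.mp hchain with ⟨hji, hit⟩
    have hy := ih i hit
    show listProd (x U A j * x U A i) (t.map (x U A)) ∈ _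
    rw [listProd_cons]
    set y := listProd (x U A i) (t.map (x U A)) with hy_def
    have h1 : y ∈ (f U A i).1 := star_subset U _ hy
    have h2 : y ∈ (f U A (j + 1)).1 := f_antitone hU hinf hA hji h1
    rw [f_succ] at h2
    exact h2.2

end main

end FPaux

open FPaux in
/-- The Finite Products Theorem: if `X` is an infinite semigroup which is
either idempotent-free or weakly left cancellative, then for every finite
coloring of `X` there are a color `i` and an injective sequence in `X` all of
whose finite products along increasing index tuples have color `i`. -/
theorem stmt_9 (X : Type) [Semigroup X] [Infinite X]
    (h : (∀ x : X, x * x ≠ x) ∨ ∀ a b : X, {x : X | a * x = b}.Finite)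
    (k : ℕ) (c : X → Fin k) :
    ∃ (i : Fin k) (x : ℕ → X), Function.Injective x ∧
      ∀ (j : ℕ) (l : List ℕ), (j :: l).Chain' (· < ·) →
        c (listProd (x j) (l.map x)) = i := by
  -- First, obtain an idempotent ultrafilter all of whose members are infinite.
  obtain ⟨U, hU, hinf⟩ : ∃ U : Ultrafilter X, U * U = U ∧ ∀ s ∈ U, s.Infinite := by
    rcases h with hfree | hwlc
    · obtain ⟨U, hU⟩ := exists_idempotent_of_compact_t2_of_continuous_mul_left
        (Ultrafilter.continuous_mul_left (M := X))
      refine ⟨U, hU, fun s hs => ?_⟩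
      by_contra hfin
      rw [Set.not_infinite] at hfin
      obtain ⟨a, _, ha⟩ := Ultrafilter.eq_pure_of_finite_mem hfin hs
      have : ({a * a} : Set X) ∈ U := by
        rw [← hU, FPaux.mem_mul, ha]
        simp [Ultrafilter.mem_pure]
      rw [ha] at this
      exact hfree a (Ultrafilter.mem_pure.mp this).symm
    · set C : Set (Ultrafilter X) := {U | ∀ s ∈ U, s.Infinite} with hC
      have hCne : C.Nonempty := by
        refine ⟨Filter.hyperfilter X, fun s hs => ?_⟩
        by_contra hfin
        rw [Set.not_infinite] at hfin
        exact Filter.notMem_hyperfilter_of_finite hfin hs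
      have hCcl : IsClosed C := by
        have hCeq : C = ⋂ s ∈ {s : Set X | s.Finite}, {U : Ultrafilter X | s ∈ U}ᶜ := by
          ext U
          simp only [Set.mem_iInter, Set.mem_compl_iff, Set.mem_setOf_eq, hC]
          constructor
          · exact fun hu s hsf hsU => hu s hsU hsf
          · exact fun hu s hsU hsf => hu s hsf hsU
        rw [hCeq]
        exact isClosed_biInter fun s _ => (ultrafilter_isOpen_basic s).isClosed_compl
      have hmul : ∀ U ∈ C, ∀ V ∈ C, U * V ∈ C := by
        intro U hUC V hVC s hs
        intro hfin
        rw [FPaux.mem_mul] at hs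
        obtain ⟨a, ha⟩ := Ultrafilter.nonempty_of_mem hs
        have heq : {b | a * b ∈ s} = ⋃ y ∈ s, {b : X | a * b = y} := by
          ext b; simp
        have hfin2 : {b | a * b ∈ s}.Finite := by
          rw [heq]; exact hfin.biUnion fun y _ => hwlc a y
        exact hVC _ ha hfin2
      obtain ⟨U, hUC, hUid⟩ := exists_idempotent_in_compact_subsemigroup
        Ultrafilter.continuous_mul_left C hCne hCcl.isCompact hmul
      exact ⟨U, hUid, hUC⟩
  -- Pick the monochromatic class.
  obtain ⟨i, hi⟩ : ∃ i : Fin k, c ⁻¹' {i} ∈ U := by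
    have huniv : (⋃ i ∈ (Set.univ : Set (Fin k)), c ⁻¹' {i}) ∈ U := by
      have : (⋃ i ∈ (Set.univ : Set (Fin k)), c ⁻¹' {i}) = Set.univ := by
        ext a; simp
      rw [this]; exact Filter.univ_mem
    obtain ⟨i, _, hi⟩ := (Ultrafilter.finite_biUnion_mem_iff (Set.finite_univ)).mp huniv
    exact ⟨i, hi⟩
  set A := c ⁻¹' {i} with hAdef
  refine ⟨i, x U A, ?_, ?_⟩
  · -- injectivity
    have hmemlist : ∀ n m, m < n → x U A m ∈ (f U A n).2 := by
      intro n
      induction n with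
      | zero => intro m hm; omega
      | succ n ih =>
        intro m hm
        rw [f_succ]
        rcases Nat.lt_succ_iff_lt_or_eq.mp hm with hlt | heq
        · exact List.mem_cons_of_mem _ (ih m hlt)
        · rw [heq]; exact List.mem_cons_self
    have hne : ∀ m n, m < n → x U A m ≠ x U A n := by
      intro m n hmn heq
      have h1 := (x_mem hU hinf hi n).2
      exact h1 (heq ▸ hmemlist n m hmn)
    intro a b hab
    rcases Nat.lt_trichotomy a b with hlt | heq | hgt
    · exact absurd hab (hne a b hlt)
    · exact heq
    · exact absurd hab.symm (hne b a hgt)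
  · intro j l hchain
    have := prod_mem_star hU hinf hi l j hchain
    have hsub : (f U A j).1 ⊆ A := (f_antitone hU hinf hi (Nat.zero_le j))
    have : listProd (x U A j) (l.map (x U A)) ∈ A := hsub (star_subset U _ this)
    exact this
end

section
/- (Bergelson–Hindman) For every finite coloring of the positive natural numbers there exist a color class A and two injective infinite sequences (xᵢ) and (yᵢ) such that FS(xᵢ)_{i<ω} ∪ FP(yᵢ)_{i<ω} ⊆ A, i.e. all finite sums of the xᵢ (over increasing index tuples) and all finite products of the yᵢ lie in A. -/
open Filter Hindman

attribute [local instance] Ultrafilter.mul Ultrafilter.add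
  Ultrafilter.semigroup Ultrafilter.addSemigroup

namespace BH11

/-- `Ultrafilter.map` is continuous. -/
lemma continuous_umap {α β : Type*} (f : α → β) :
    Continuous (Ultrafilter.map f : Ultrafilter α → Ultrafilter β) :=
  ultrafilterBasis_is_basis.continuous_iff.2 <| Set.forall_mem_range.mpr fun s => by
    have : (Ultrafilter.map f) ⁻¹' {u : Ultrafilter β | s ∈ u}
        = {u : Ultrafilter α | f ⁻¹' s ∈ u} := by
      ext u; simp [Ultrafilter.mem_map]
    rw [this]
    exact ultrafilter_isOpen_basic _

lemma pure_mul (n : ℕ) (q : Ultrafilter ℕ) :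
    (pure n : Ultrafilter ℕ) * q = q.map (n * ·) :=
  Ultrafilter.coe_inj.mp <| Filter.ext' fun p => by
    rw [Ultrafilter.eventually_mul, Ultrafilter.coe_map, eventually_map]
    simp

lemma map_mul_left_add (n : ℕ) (U V : Ultrafilter ℕ) :
    U.map (n * ·) + V.map (n * ·) = (U + V).map (n * ·) :=
  Ultrafilter.coe_inj.mp <| Filter.ext' fun p => by
    simp only [Ultrafilter.eventually_add, Ultrafilter.coe_map, eventually_map, Nat.mul_add]

lemma mem_closure_pure {A : Set ℕ} {U : Ultrafilter ℕ} (hA : A ∈ U) :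
    U ∈ closure (pure '' A : Set (Ultrafilter ℕ)) := by
  rw [ultrafilterBasis_is_basis.mem_closure_iff]
  rintro _ ⟨t, rfl⟩ (ht : t ∈ U)
  obtain ⟨n, hnt, hnA⟩ := Ultrafilter.nonempty_of_mem (Filter.inter_mem ht hA)
  exact ⟨pure n, mem_pure.mpr hnt, ⟨n, hnA, rfl⟩⟩

lemma exists_strictMono_FS (a : Stream' ℕ) (h1 : ∀ i, 1 ≤ a.get i) :
    ∃ x : ℕ → ℕ, StrictMono x ∧ ∀ F : Finset ℕ, F.Nonempty → (∑ j ∈ F, x j) ∈ FS a := by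
  let f : ℕ → ℕ × ℕ := fun j => Nat.rec (0, 1)
    (fun _ p => (p.2, p.2 + (∑ i ∈ Finset.Ico p.1 p.2, a.get i) + 1)) j
  let x : ℕ → ℕ := fun j => ∑ i ∈ Finset.Ico (f j).1 (f j).2, a.get i
  have hf1 : ∀ j, (f (j + 1)).1 = (f j).2 := fun j => rfl
  have hf2 : ∀ j, (f (j + 1)).2 = (f j).2 + x j + 1 := fun j => rfl
  have hlt : ∀ j, (f j).1 < (f j).2 := by
    intro j
    induction j with
    | zero => exact Nat.zero_lt_one
    | succ n ih => rw [hf1, hf2]; omega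
  have hmono2 : Monotone (fun j => (f j).2) :=
    monotone_nat_of_le_succ (fun j => by rw [hf2]; omega)
  have hsep : ∀ {j k : ℕ}, j < k → (f j).2 ≤ (f k).1 := by
    intro j k hjk
    obtain ⟨m, rfl⟩ := Nat.exists_eq_add_of_lt hjk
    rw [hf1]
    exact hmono2 (Nat.le_add_right j m)
  have hxlow : ∀ j, (f j).2 - (f j).1 ≤ x j := by
    intro j
    have := Finset.card_nsmul_le_sum (Finset.Ico (f j).1 (f j).2)
      (fun i => a.get i) 1 (fun i _ => h1 i)
    simpa [Nat.card_Ico] using this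
  have hx : StrictMono x := by
    apply strictMono_nat_of_lt_succ
    intro j
    have h := hxlow (j + 1)
    rw [hf2, hf1] at h
    omega
  refine ⟨x, hx, fun F hF => ?_⟩
  have hdisj : (↑F : Set ℕ).PairwiseDisjoint (fun j => Finset.Ico (f j).1 (f j).2) := by
    intro j _ k _ hjk
    rcases Ne.lt_or_gt hjk with h | h
    all_goals
      refine Finset.disjoint_left.mpr (fun i hi hi' => ?_)
      simp only [Finset.mem_Ico] at hi hi'
      have := hsep h
      omega
  have hsum : ∑ j ∈ F, x j = ∑ i ∈ F.biUnion (fun j => Finset.Ico (f j).1 (f j).2), a.get i :=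
    (Finset.sum_biUnion hdisj).symm
  rw [hsum]
  apply FS.finset_sum
  obtain ⟨j, hj⟩ := hF
  exact ⟨(f j).1, Finset.mem_biUnion.mpr ⟨j, hj, Finset.mem_Ico.mpr ⟨le_refl _, hlt j⟩⟩⟩

lemma exists_strictMono_FP (a : Stream' ℕ) (h2 : ∀ i, 2 ≤ a.get i) :
    ∃ y : ℕ → ℕ, StrictMono y ∧ ∀ F : Finset ℕ, F.Nonempty → (∏ j ∈ F, y j) ∈ FP a := by
  let f : ℕ → ℕ × ℕ := fun j => Nat.rec (0, 1)
    (fun _ p => (p.2, p.2 + (∏ i ∈ Finset.Ico p.1 p.2, a.get i) + 1)) j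
  let y : ℕ → ℕ := fun j => ∏ i ∈ Finset.Ico (f j).1 (f j).2, a.get i
  have hf1 : ∀ j, (f (j + 1)).1 = (f j).2 := fun j => rfl
  have hf2 : ∀ j, (f (j + 1)).2 = (f j).2 + y j + 1 := fun j => rfl
  have hlt : ∀ j, (f j).1 < (f j).2 := by
    intro j
    induction j with
    | zero => exact Nat.zero_lt_one
    | succ n ih => rw [hf1, hf2]; omega
  have hmono2 : Monotone (fun j => (f j).2) :=
    monotone_nat_of_le_succ (fun j => by rw [hf2]; omega)
  have hsep : ∀ {j k : ℕ}, j < k → (f j).2 ≤ (f k).1 := by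
    intro j k hjk
    obtain ⟨m, rfl⟩ := Nat.exists_eq_add_of_lt hjk
    rw [hf1]
    exact hmono2 (Nat.le_add_right j m)
  have hylow : ∀ j, 2 ^ ((f j).2 - (f j).1) ≤ y j := by
    intro j
    have := Finset.prod_le_prod' (s := Finset.Ico (f j).1 (f j).2)
      (f := fun _ => 2) (g := fun i => a.get i) (fun i _ => h2 i)
    simpa [Finset.prod_const, Nat.card_Ico] using this
  have hy : StrictMono y := by
    apply strictMono_nat_of_lt_succ
    intro j
    have h := hylow (j + 1)
    have he : (f (j + 1)).2 - (f (j + 1)).1 = y j + 1 := by rw [hf2, hf1]; omega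
    rw [he] at h
    calc y j < 2 ^ (y j) := Nat.lt_two_pow_self
    _ ≤ 2 ^ (y j + 1) := Nat.pow_le_pow_right (by norm_num) (Nat.le_succ _)
    _ ≤ y (j + 1) := h
  refine ⟨y, hy, fun F hF => ?_⟩
  have hdisj : (↑F : Set ℕ).PairwiseDisjoint (fun j => Finset.Ico (f j).1 (f j).2) := by
    intro j _ k _ hjk
    rcases Ne.lt_or_gt hjk with h | h
    all_goals
      refine Finset.disjoint_left.mpr (fun i hi hi' => ?_)
      simp only [Finset.mem_Ico] at hi hi'
      have := hsep h
      omega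
  have hprod : ∏ j ∈ F, y j = ∏ i ∈ F.biUnion (fun j => Finset.Ico (f j).1 (f j).2), a.get i :=
    (Finset.prod_biUnion hdisj).symm
  rw [hprod]
  apply FP.finset_prod
  obtain ⟨j, hj⟩ := hF
  exact ⟨(f j).1, Finset.mem_biUnion.mpr ⟨j, hj, Finset.mem_Ico.mpr ⟨le_refl _, hlt j⟩⟩⟩

end BH11

/-- Bergelson–Hindman: for every finite coloring of the positive natural
numbers there are a color `i` and injective sequences `(xᵢ)` and `(yᵢ)` of
positive naturals such that all finite sums of the `xᵢ` and all finite
products of the `yᵢ` have color `i`. -/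
theorem stmt_11 (k : ℕ) (c : ℕ → Fin k) :
    ∃ (i : Fin k) (x y : ℕ → ℕ),
      (∀ j, 0 < x j) ∧ Function.Injective x ∧
      (∀ j, 0 < y j) ∧ Function.Injective y ∧
      (∀ F : Finset ℕ, F.Nonempty → c (∑ j ∈ F, x j) = i) ∧
      (∀ F : Finset ℕ, F.Nonempty → c (∏ j ∈ F, y j) = i) := by
  classical
  set S : Set (Ultrafilter ℕ) := {U | ∀ n : ℕ, {m | n ≤ m} ∈ U} with hSdef
  have hS_closed : IsClosed S := by
    have hrw : S = ⋂ n : ℕ, {U : Ultrafilter ℕ | {m | n ≤ m} ∈ U} := by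
      ext U; simp [hSdef, Set.mem_iInter]
    rw [hrw]
    exact isClosed_iInter fun n => ultrafilter_isClosed_basic _
  have hS_ne : (Filter.hyperfilter ℕ : Ultrafilter ℕ) ∈ S := by
    intro n
    apply Filter.mem_hyperfilter_of_finite_compl
    have hrw : {m : ℕ | n ≤ m}ᶜ = {m | m < n} := by ext m; simp [not_le]
    rw [hrw]
    exact Set.finite_lt_nat n
  have hS_add : ∀ U ∈ S, ∀ V ∈ S, U + V ∈ S := by
    intro U hU V hV n
    show ∀ᶠ m in ↑(U + V), n ≤ m
    rw [Ultrafilter.eventually_add]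
    filter_upwards [hU n] with m hm
    exact Filter.Eventually.of_forall fun m' => le_trans hm (Nat.le_add_right _ _)
  obtain ⟨e0, he0S, he0⟩ := exists_idempotent_in_compact_add_subsemigroup
    (fun r => Ultrafilter.continuous_add_left r) S ⟨_, hS_ne⟩ hS_closed.isCompact hS_add
  set E : Set (Ultrafilter ℕ) := {U | U ∈ S ∧ U + U = U} with hEdef
  have hE_ne : E.Nonempty := ⟨e0, he0S, he0⟩
  have hES : closure E ⊆ S := closure_minimal (fun U hU => hU.1) hS_closed
  have hmapE : ∀ n : ℕ, 1 ≤ n → ∀ U ∈ E, U.map (n * ·) ∈ E := by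
    intro n hn U hU
    constructor
    · intro t
      rw [Ultrafilter.mem_map]
      apply Filter.mem_of_superset (hU.1 t)
      intro m hm
      simp only [Set.mem_preimage, Set.mem_setOf_eq] at *
      calc t ≤ m := hm
      _ ≤ n * m := Nat.le_mul_of_pos_left m hn
    · rw [BH11.map_mul_left_add, hU.2]
  have hpureE : ∀ n : ℕ, 1 ≤ n → ∀ q ∈ closure E, (pure n : Ultrafilter ℕ) * q ∈ closure E := by
    intro n hn q hq
    rw [BH11.pure_mul]
    have h1 : Ultrafilter.map (n * ·) q ∈ closure (Ultrafilter.map (n * ·) '' E) :=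
      image_closure_subset_closure_image (BH11.continuous_umap _) ⟨q, hq, rfl⟩
    have hsub : Ultrafilter.map (n * ·) '' E ⊆ closure E := by
      rintro _ ⟨U, hU, rfl⟩
      exact subset_closure (hmapE n hn U hU)
    have h2 := closure_mono hsub h1
    rwa [closure_closure] at h2
  have hmul : ∀ p ∈ closure E, ∀ q ∈ closure E, p * q ∈ closure E := by
    intro p hp q hq
    have hp1 : {m : ℕ | 1 ≤ m} ∈ p := hES hp 1
    have hpc : p ∈ closure (pure '' {m : ℕ | 1 ≤ m}) := BH11.mem_closure_pure hp1
    have h1 : p * q ∈ closure ((· * q) '' (pure '' {m : ℕ | 1 ≤ m})) :=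
      image_closure_subset_closure_image (Ultrafilter.continuous_mul_left q) ⟨p, hpc, rfl⟩
    have h2 : ((· * q) '' (pure '' {m : ℕ | 1 ≤ m})) ⊆ closure E := by
      rintro _ ⟨_, ⟨n, hn, rfl⟩, rfl⟩
      exact hpureE n hn q hq
    have h3 := closure_mono h2 h1
    rwa [closure_closure] at h3
  obtain ⟨q0, hq0Γ, hq0⟩ := exists_idempotent_in_compact_subsemigroup
    (fun r => Ultrafilter.continuous_mul_left r) (closure E)
    (hE_ne.mono subset_closure) isClosed_closure.isCompact hmul
  have h2q0 : {m : ℕ | 2 ≤ m} ∈ q0 := hES hq0Γ 2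
  have hcover : {m : ℕ | 2 ≤ m} = ⋃ i ∈ (Set.univ : Set (Fin k)), {m : ℕ | 2 ≤ m ∧ c m = i} := by
    ext m
    simp only [Set.mem_setOf_eq, Set.mem_iUnion, Set.mem_univ, exists_prop, true_and]
    exact ⟨fun h => ⟨c m, h, rfl⟩, fun ⟨j, h, _⟩ => h⟩
  obtain ⟨i, -, hiA⟩ := (Ultrafilter.finite_biUnion_mem_iff Set.finite_univ).mp (hcover ▸ h2q0)
  set A : Set ℕ := {m | 2 ≤ m ∧ c m = i} with hAdef
  -- FP side
  obtain ⟨b, hb⟩ := exists_FP_of_large q0 hq0 A hiA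
  have hb2 : ∀ j, 2 ≤ b.get j := fun j => (hb (FP.singleton b j)).1
  obtain ⟨y, hy, hyF⟩ := BH11.exists_strictMono_FP b hb2
  -- FS side
  obtain ⟨p, hpA, hpE⟩ := _root_.mem_closure_iff.mp hq0Γ _ (ultrafilter_isOpen_basic A) hiA
  obtain ⟨a, ha⟩ := exists_FS_of_large p hpE.2 A hpA
  have ha1 : ∀ j, 1 ≤ a.get j := fun j => le_trans one_le_two (ha (FS.singleton a j)).1
  obtain ⟨x, hx, hxF⟩ := BH11.exists_strictMono_FS a ha1
  refine ⟨i, x, y, ?_, hx.injective, ?_, hy.injective, ?_, ?_⟩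
  · intro j
    have h := hxF {j} (Finset.singleton_nonempty j)
    rw [Finset.sum_singleton] at h
    have := (ha h).1
    omega
  · intro j
    have h := hyF {j} (Finset.singleton_nonempty j)
    rw [Finset.prod_singleton] at h
    have := (hb h).1
    omega
  · intro F hF
    exact (ha (hxF F hF)).2
  · intro F hF
    exact (hb (hyF F hF)).2
end

section
/- Let K be a polyring and F a term in variables x₁,…,xₙ of nonzero degree d. Then there exists a term G in variables x₁,…,xₙ,y₁,…,yₙ, of degree less than d with respect to x₁,…,xₙ, such that F(x⃗ + y⃗) = F(x⃗) + F(y⃗) + G(x⃗, y⃗) holds for all values in K. -/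
/-- Terms over a polyring signature: variables, constants from `K` (including
`0`), addition, and extra operations indexed by `ι` with arities `ar`. -/
inductive PTerm (K ι : Type) (ar : ι → ℕ) (n : ℕ) : Type
  | var : Fin n → PTerm K ι ar n
  | const : K → PTerm K ι ar n
  | add : PTerm K ι ar n → PTerm K ι ar n → PTerm K ι ar n
  | op (i : ι) : (Fin (ar i) → PTerm K ι ar n) → PTerm K ι ar n

variable {K ι : Type} {ar : ι → ℕ} {n : ℕ}

/-- Evaluation of a term at a point of `Kⁿ`. -/
def PTerm.eval [AddCommGroup K] (ops : ∀ i, (Fin (ar i) → K) → K) :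
    PTerm K ι ar n → (Fin n → K) → K
  | .var j, a => a j
  | .const c, _ => c
  | .add s t, a => s.eval ops a + t.eval ops a
  | .op i ts, a => ops i fun j => (ts j).eval ops a

/-- A monomial is a term not containing `+`. -/
def PTerm.IsMonomial : PTerm K ι ar n → Prop
  | .var _ => True
  | .const _ => True
  | .add _ _ => False
  | .op _ ts => ∀ j, (ts j).IsMonomial

/-- A polynomial is a finite sum of monomials. -/
def PTerm.IsPolynomial : PTerm K ι ar n → Prop
  | .add s t => s.IsPolynomial ∧ t.IsPolynomial
  | t => t.IsMonomial

/-- Degree bookkeeping: the number of occurrences of variables from `V` in a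
monomial, extended to sums by taking the maximum of the summands (so on
polynomials this computes the degree w.r.t. `V`). -/
def PTerm.occ : PTerm K ι ar n → Finset (Fin n) → ℕ
  | .var j, V => if j ∈ V then 1 else 0
  | .const _, _ => 0
  | .add s t, V => max (s.occ V) (t.occ V)
  | .op _ ts, V => ∑ j, (ts j).occ V

/-- The degree of a term w.r.t. a set `V` of variables: the minimal degree
w.r.t. `V` of a polynomial representing (inducing the same function as) it. -/
noncomputable def PTerm.degree [AddCommGroup K] (ops : ∀ i, (Fin (ar i) → K) → K)
    (F : PTerm K ι ar n) (V : Finset (Fin n)) : ℕ :=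
  sInf {d | ∃ P : PTerm K ι ar n, P.IsPolynomial ∧
    (∀ a, P.eval ops a = F.eval ops a) ∧ P.occ V ≤ d}

/-- The polyring condition: each extra operation is distributive w.r.t. `+`,
i.e. additive in every argument. -/
def IsPolyring [AddCommGroup K] (ops : ∀ i, (Fin (ar i) → K) → K) : Prop :=
  ∀ (i : ι) (j : Fin (ar i)) (a : Fin (ar i) → K) (x y : K),
    ops i (Function.update a j (x + y)) =
      ops i (Function.update a j x) + ops i (Function.update a j y)

/-- The Zariski topology on `Kⁿ`: root sets of terms form a closed subbase,
so the closed sets are the intersections of finite unions of root sets. -/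
def zariskiTopology [AddCommGroup K] (ops : ∀ i, (Fin (ar i) → K) → K) (n : ℕ) :
    TopologicalSpace (Fin n → K) :=
  TopologicalSpace.generateFrom
    {U | ∃ F : PTerm K ι ar n, U = {a | F.eval ops a = 0}ᶜ}

-- ===== auxiliary development =====

namespace PTerm

def rename {m : ℕ} (f : Fin n → Fin m) : PTerm K ι ar n → PTerm K ι ar m
  | .var j => .var (f j)
  | .const c => .const c
  | .add s t => .add (s.rename f) (t.rename f)
  | .op i ts => .op i fun j => (ts j).rename f

lemma eval_rename [AddCommGroup K] (ops : ∀ i, (Fin (ar i) → K) → K) {m : ℕ}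
    (f : Fin n → Fin m) (t : PTerm K ι ar n) (b : Fin m → K) :
    (t.rename f).eval ops b = t.eval ops (b ∘ f) := by
  induction t with
  | var j => rfl
  | const c => rfl
  | add s t ihs iht => simp [rename, eval, ihs, iht]
  | op i ts ih => simp [rename, eval, ih]

lemma isMonomial_rename {m : ℕ} (f : Fin n → Fin m) (t : PTerm K ι ar n)
    (h : t.IsMonomial) : (t.rename f).IsMonomial := by
  induction t with
  | var j => trivial
  | const c => trivial
  | add s t ihs iht => exact absurd h (by simp [IsMonomial])
  | op i ts ih => exact fun j => ih j (h j)

lemma occ_rename {m : ℕ} (f : Fin n → Fin m) (t : PTerm K ι ar n) (V : Finset (Fin m)) :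
    (t.rename f).occ V = t.occ (Finset.univ.filter fun j => f j ∈ V) := by
  induction t with
  | var j => simp [rename, occ]
  | const c => rfl
  | add s t ihs iht => simp [rename, occ, ihs, iht]
  | op i ts ih => simp [rename, occ, ih]

lemma eval_congr_occ_zero [AddCommGroup K] (ops : ∀ i, (Fin (ar i) → K) → K)
    (t : PTerm K ι ar n) (h : t.occ Finset.univ = 0) (a a' : Fin n → K) :
    t.eval ops a = t.eval ops a' := by
  induction t with
  | var j => simp [occ] at h
  | const c => rfl
  | add s t ihs iht =>
      simp only [occ, Nat.max_eq_zero_iff] at h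
      simp [eval, ihs h.1, iht h.2]
  | op i ts ih =>
      simp only [occ, Finset.sum_eq_zero_iff, Finset.mem_univ, true_implies] at h
      simp only [eval]
      congr 1
      funext j
      exact ih j (h j)

end PTerm

lemma ops_update_zero [AddCommGroup K] {ops : ∀ i, (Fin (ar i) → K) → K}
    (hpoly : IsPolyring ops) (i : ι) (a : Fin (ar i) → K) (j : Fin (ar i)) :
    ops i (Function.update a j 0) = 0 := by
  have h := hpoly i j a 0 0
  rw [add_zero] at h
  exact add_eq_left.mp h.symm

lemma ops_update_sum [AddCommGroup K] {ops : ∀ i, (Fin (ar i) → K) → K}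
    (hpoly : IsPolyring ops) (i : ι) (a : Fin (ar i) → K) (j : Fin (ar i)) (l : List K) :
    ops i (Function.update a j l.sum) = (l.map fun x => ops i (Function.update a j x)).sum := by
  induction l with
  | nil => simpa using ops_update_zero hpoly i a j
  | cons x xs ih => rw [List.sum_cons, hpoly i j a x xs.sum, ih, List.map_cons, List.sum_cons]

lemma list_sum_map_sub {α : Type*} [AddCommGroup K] (l : List α) (A B : α → K) :
    (l.map fun t => A t - B t).sum = (l.map A).sum - (l.map B).sum := by
  induction l with
  | nil => simp
  | cons x xs ih => simp [ih]; abel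


lemma sum_map_flatMap {α β : Type*} [AddCommGroup K] (l : List α) (f : α → List β) (g : β → K) :
    ((l.flatMap f).map g).sum = (l.map fun a => ((f a).map g).sum).sum := by
  induction l with
  | nil => simp
  | cons x xs ih => simp [ih]

open Classical in
lemma expansion [AddCommGroup K] {ops : ∀ i, (Fin (ar i) → K) → K} (hpoly : IsPolyring ops)
    {m : ℕ} (i : ι) (h : Fin (ar i) → PTerm K ι ar m) (T : Fin (ar i) → List (PTerm K ι ar m))
    (k : ℕ) :
    k ≤ ar i → ∀ tail : Fin (ar i) → PTerm K ι ar m,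
    ∃ E : List (Fin (ar i) → PTerm K ι ar m),
      (∀ f, f ∈ E ↔ ((∀ j : Fin (ar i), j.val < k → f j ∈ h j :: T j) ∧
        (∃ j0 : Fin (ar i), j0.val < k ∧ f j0 ∈ T j0) ∧
        ∀ j : Fin (ar i), k ≤ j.val → f j = tail j)) ∧
      ∀ b : Fin m → K,
        (E.map fun f => ops i fun j => (f j).eval ops b).sum =
          ops i (fun j => if j.val < k then ((h j :: T j).map fun t => t.eval ops b).sum
            else (tail j).eval ops b) -
          ops i fun j => if j.val < k then (h j).eval ops b else (tail j).eval ops b := by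
  induction k with
  | zero =>
      intro _ tail
      refine ⟨[], by simp, fun b => by simp⟩
  | succ k ih =>
      intro hk tail
      have hk' : k < ar i := hk
      obtain ⟨κ, hκv⟩ : ∃ κ : Fin (ar i), κ.val = k := ⟨⟨k, hk'⟩, rfl⟩
      choose Ef hEmem hEsum using ih (le_of_lt hk')
      refine ⟨((h κ :: T κ).flatMap fun t => Ef (Function.update tail κ t)) ++
        (T κ).map (fun t j => if j.val < k then h j else if j = κ then t else tail j),
        ?_, ?_⟩
      · intro f
        constructor
        · intro hf
          rcases List.mem_append.mp hf with hf | hf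
          · rcases List.mem_flatMap.mp hf with ⟨t, ht, hft⟩
            obtain ⟨h1, ⟨j0, hj0, hj0T⟩, h2⟩ := (hEmem _ f).mp hft
            refine ⟨?_, ⟨j0, by omega, hj0T⟩, ?_⟩
            · intro j hj
              by_cases hjk : j.val < k
              · exact h1 j hjk
              · have hjκ : j = κ := Fin.ext (by omega)
                rw [h2 j (by omega), hjκ, Function.update_self]
                exact ht
            · intro j hj
              have hjκ : j ≠ κ := fun hc => by rw [hc] at hj; omega
              rw [h2 j (by omega), Function.update_of_ne hjκ]
          · obtain ⟨t, ht, rfl⟩ := List.mem_map.mp hf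
            refine ⟨?_, ⟨κ, by omega, ?_⟩, ?_⟩
            · intro j hj
              by_cases hjk : j.val < k
              · simp only [hjk, if_true]
                exact List.mem_cons_self
              · have hjκ : j = κ := Fin.ext (by omega)
                rw [hjκ]
                have hκk : ¬ κ.val < k := by omega
                simp only [hκk, if_false, if_pos rfl]
                exact List.mem_cons_of_mem _ ht
            · have hκk : ¬ κ.val < k := by omega
              simp only [hκk, if_false, if_pos rfl]
              exact ht
            · intro j hj
              have hjk : ¬ j.val < k := by omega
              have hjκ : j ≠ κ := fun hc => by rw [hc] at hj; omega
              simp only [hjk, if_false, if_neg hjκ]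
        · rintro ⟨h1, ⟨j0, hj0, hj0T⟩, h2⟩
          by_cases hc : ∃ j1 : Fin (ar i), j1.val < k ∧ f j1 ∈ T j1
          · refine List.mem_append_left _ (List.mem_flatMap.mpr ⟨f κ, h1 κ (by omega), ?_⟩)
            refine (hEmem _ f).mpr ⟨fun j hj => h1 j (by omega), hc, fun j hj => ?_⟩
            by_cases hjκ : j = κ
            · rw [hjκ, Function.update_self]
            · rw [Function.update_of_ne hjκ]
              refine h2 j ?_
              have : j.val ≠ k := fun hc' => hjκ (Fin.ext (by omega))
              omega
          · refine List.mem_append_right _ (List.mem_map.mpr ⟨f κ, ?_, ?_⟩)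
            · have hj0κ : j0 = κ := by
                by_cases hlt : j0.val < k
                · exact absurd ⟨j0, hlt, hj0T⟩ hc
                · exact Fin.ext (by omega)
              rw [← hj0κ]
              exact hj0T
            · funext j
              by_cases hjk : j.val < k
              · simp only [hjk, if_true]
                rcases List.mem_cons.mp (h1 j (by omega)) with he | hm
                · exact he.symm
                · exact absurd ⟨j, hjk, hm⟩ hc
              · by_cases hjκ : j = κ
                · rw [hjκ]
                  have hκk : ¬ κ.val < k := by omega
                  simp [hκk]
                · have hjge : k + 1 ≤ j.val := by
                    have : j.val ≠ k := fun hc' => hjκ (Fin.ext (by omega))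
                    omega
                  simp only [hjk, if_false, if_neg hjκ, h2 j hjge]
      · intro b
        set ev : PTerm K ι ar m → K := fun t => t.eval ops b with hev
        set W : Fin (ar i) → K :=
          (fun j => if j.val < k then ((h j :: T j).map ev).sum else ev (tail j)) with hW
        set Y : Fin (ar i) → K :=
          (fun j => if j.val < k then ev (h j) else ev (tail j)) with hY
        have hA : ∀ t : PTerm K ι ar m,
            ((Ef (Function.update tail κ t)).map fun f => ops i fun j => (f j).eval ops b).sum
              = ops i (Function.update W κ (ev t)) - ops i (Function.update Y κ (ev t)) := by
          intro t
          rw [hEsum (Function.update tail κ t) b]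
          congr 2
          · funext j
            by_cases hjκ : j = κ
            · have hjk : ¬ j.val < k := by rw [hjκ]; omega
              rw [if_neg hjk, hjκ, Function.update_self, Function.update_self]
            · rw [Function.update_of_ne hjκ, Function.update_of_ne hjκ, hW]
          · funext j
            by_cases hjκ : j = κ
            · have hjk : ¬ j.val < k := by rw [hjκ]; omega
              rw [if_neg hjk, hjκ, Function.update_self, Function.update_self]
            · rw [Function.update_of_ne hjκ, Function.update_of_ne hjκ, hY]
        have hB : ∀ t : PTerm K ι ar m,
            (ops i fun j => ((fun t (j : Fin (ar i)) =>
                if j.val < k then h j else if j = κ then t else tail j) t j).eval ops b)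
              = ops i (Function.update Y κ (ev t)) := by
          intro t
          congr 1
          funext j
          by_cases hjκ : j = κ
          · rw [hjκ, Function.update_self]
            have hκk : ¬ κ.val < k := by omega
            simp [hκk, hev]
          · rw [Function.update_of_ne hjκ, hY]
            by_cases hjk : j.val < k
            · simp [hjk, hjκ, hev]
            · simp [hjk, hjκ, hev]
        have hD : ((h κ :: T κ).map fun t => ops i (Function.update W κ (ev t))).sum
            = ops i (Function.update W κ (((h κ :: T κ).map ev).sum)) := by
          rw [ops_update_sum hpoly i W κ ((h κ :: T κ).map ev), List.map_map]
          rfl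
        have hWfin : Function.update W κ (((h κ :: T κ).map ev).sum)
            = fun j => if j.val < k + 1 then ((h j :: T j).map ev).sum
              else ev (tail j) := by
          funext j
          by_cases hjκ : j = κ
          · rw [hjκ, Function.update_self, if_pos (by omega)]
          · rw [Function.update_of_ne hjκ]
            have hjne : j.val ≠ k := fun hc' => hjκ (Fin.ext (by omega))
            by_cases hjk : j.val < k
            · simp [hW, hjk, show j.val < k + 1 by omega]
            · simp [hW, hjk, show ¬ (j.val < k + 1) by omega]
        have hYfin : Function.update Y κ (ev (h κ))
            = fun j => if j.val < k + 1 then ev (h j) else ev (tail j) := by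
          funext j
          by_cases hjκ : j = κ
          · rw [hjκ, Function.update_self, if_pos (by omega)]
          · rw [Function.update_of_ne hjκ]
            have hjne : j.val ≠ k := fun hc' => hjκ (Fin.ext (by omega))
            by_cases hjk : j.val < k
            · simp [hY, hjk, show j.val < k + 1 by omega]
            · simp [hY, hjk, show ¬ (j.val < k + 1) by omega]
        have hmapA : ((h κ :: T κ).map fun a =>
              ((Ef (Function.update tail κ a)).map fun f => ops i fun j => (f j).eval ops b).sum)
            = (h κ :: T κ).map fun t =>
              ops i (Function.update W κ (ev t)) - ops i (Function.update Y κ (ev t)) :=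
          List.map_congr_left (fun t _ => hA t)
        have hmapB : ((T κ).map ((fun f => ops i fun j => (f j).eval ops b) ∘
              fun t (j : Fin (ar i)) => if j.val < k then h j else if j = κ then t else tail j))
            = (T κ).map fun t => ops i (Function.update Y κ (ev t)) :=
          List.map_congr_left (fun t _ => hB t)
        rw [List.map_append, List.sum_append, sum_map_flatMap, List.map_map]
        rw [hmapA, hmapB, list_sum_map_sub, hD, hWfin]
        simp only [List.map_cons, List.sum_cons]
        rw [hYfin]
        simp only [hev, hY]
        abel

namespace PTerm

lemma occ_empty (t : PTerm K ι ar n) : t.occ (∅ : Finset (Fin n)) = 0 := by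
  induction t with
  | var j => simp [occ]
  | const c => rfl
  | add s t ihs iht => simp [occ, ihs, iht]
  | op i ts ih => simp [occ, ih]

lemma occ_rename_castAdd (t : PTerm K ι ar n) :
    (t.rename (Fin.castAdd n)).occ (Finset.univ.image (Fin.castAdd n)) =
      t.occ Finset.univ := by
  rw [occ_rename]
  congr 1
  ext j
  simp only [Finset.mem_filter, Finset.mem_univ, true_and, Finset.mem_image, iff_true]
  exact ⟨j, rfl⟩

lemma occ_rename_natAdd (t : PTerm K ι ar n) :
    (t.rename (Fin.natAdd n)).occ (Finset.univ.image (Fin.castAdd n)) = 0 := by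
  rw [occ_rename]
  have : (Finset.univ.filter fun j : Fin n => Fin.natAdd n j ∈
      Finset.univ.image (Fin.castAdd n)) = ∅ := by
    ext j
    simp only [Finset.mem_filter, Finset.mem_univ, true_and, Finset.mem_image,
      Finset.notMem_empty, iff_false]
    rintro ⟨a, ha⟩
    have hval : (Fin.castAdd n a).val = (Fin.natAdd n j).val := congrArg Fin.val ha
    have h1 : (Fin.castAdd n a).val = a.val := rfl
    have h2 : (Fin.natAdd n j).val = n + j.val := rfl
    have := a.isLt
    omega
  rw [this, occ_empty]

end PTerm

open Classical in
lemma mono_expand [AddCommGroup K] {ops : ∀ i, (Fin (ar i) → K) → K} (hpoly : IsPolyring ops)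
    (M : PTerm K ι ar n) :
    M.IsMonomial →
    ∃ E : List (PTerm K ι ar (n + n)),
      (∀ t ∈ E, t.IsMonomial ∧
        t.occ (Finset.univ.image (Fin.castAdd n)) + 1 ≤ max (M.occ Finset.univ) 1) ∧
      ∀ x y : Fin n → K,
        (E.map fun t => t.eval ops (Fin.append x y)).sum =
          M.eval ops (x + y) - M.eval ops x - M.eval ops y := by
  induction M with
  | var j =>
      intro _
      refine ⟨[], by simp, fun x y => ?_⟩
      simp [PTerm.eval]
  | const c =>
      intro _
      refine ⟨[PTerm.const (-c)], ?_, fun x y => ?_⟩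
      · intro t ht
        rw [List.mem_singleton] at ht
        subst ht
        exact ⟨trivial, by simp [PTerm.occ]⟩
      · simp [PTerm.eval]
  | add s t ihs iht =>
      intro hM
      exact absurd hM (by simp [PTerm.IsMonomial])
  | op i ts ih =>
      intro hM
      by_cases he : (PTerm.op i ts).occ Finset.univ = 0
      · refine ⟨[PTerm.const (-((PTerm.op i ts).eval ops 0))], ?_, fun x y => ?_⟩
        · intro t ht
          rw [List.mem_singleton] at ht
          subst ht
          refine ⟨trivial, ?_⟩
          simp [PTerm.occ]
        · rw [PTerm.eval_congr_occ_zero ops _ he (x + y) 0,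
            PTerm.eval_congr_occ_zero ops _ he x 0,
            PTerm.eval_congr_occ_zero ops _ he y 0]
          simp [PTerm.eval]
      · choose E hE1 hE2 using fun j => ih j (hM j)
        obtain ⟨j0, hj0⟩ : ∃ j0, (ts j0).occ Finset.univ ≠ 0 := by
          by_contra hcon
          push_neg at hcon
          exact he (by simp [PTerm.occ, hcon])
        set hh : Fin (ar i) → PTerm K ι ar (n + n) :=
          (fun j => (ts j).rename (Fin.castAdd n)) with hhdef
        set TT : Fin (ar i) → List (PTerm K ι ar (n + n)) :=
          (fun j => if (ts j).occ Finset.univ = 0 then []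
            else (ts j).rename (Fin.natAdd n) :: E j) with hTTdef
        obtain ⟨E₁, hmem, hsum⟩ := expansion hpoly i hh TT (ar i) le_rfl hh
        set X := Finset.univ.image (Fin.castAdd n) with hX
        set fy : Fin (ar i) → PTerm K ι ar (n + n) := fun j =>
          if (ts j).occ Finset.univ = 0 then (ts j).rename (Fin.castAdd n)
          else (ts j).rename (Fin.natAdd n) with hfy
        have hfyE : fy ∈ E₁ := by
          refine (hmem fy).mpr ⟨fun j _ => ?_, ⟨j0, j0.isLt, ?_⟩,
            fun j hj => absurd j.isLt (by omega)⟩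
          · by_cases hj : (ts j).occ Finset.univ = 0
            · simp only [hfy, hj, if_true, hhdef]
              exact List.mem_cons_self
            · simp only [hfy, hj, if_false, hTTdef]
              exact List.mem_cons_of_mem _ (List.mem_cons_self)
          · simp only [hfy, hj0, if_false, hTTdef]
            exact List.mem_cons_self
        have happL : ∀ x y : Fin n → K, (Fin.append x y) ∘ (Fin.castAdd n) = x := by
          intro x y
          funext j
          exact Fin.append_left x y j
        have happR : ∀ x y : Fin n → K, (Fin.append x y) ∘ (Fin.natAdd n) = y := by
          intro x y
          funext j
          exact Fin.append_right x y j
        refine ⟨(E₁.map (PTerm.op i)).erase (PTerm.op i fy), ?_, ?_⟩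
        · intro t ht
          obtain ⟨f, hfE, rfl⟩ := List.mem_map.mp (List.mem_of_mem_erase ht)
          obtain ⟨h1, ⟨j1, _, hj1T⟩, -⟩ := (hmem f).mp hfE
          have hptocc : ∀ j : Fin (ar i), (f j).occ X ≤ (ts j).occ Finset.univ := by
            intro j
            rcases List.mem_cons.mp (h1 j j.isLt) with heq | hmemT
            · rw [heq, hhdef, hX, PTerm.occ_rename_castAdd]
            · by_cases hz : (ts j).occ Finset.univ = 0
              · simp [hTTdef, hz] at hmemT
              · simp only [hTTdef, hz, if_false] at hmemT
                rcases List.mem_cons.mp hmemT with heq2 | hmemE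
                · rw [heq2, hX, PTerm.occ_rename_natAdd]
                  exact Nat.zero_le _
                · have hb1 := (hE1 j _ hmemE).2
                  have hmax : max ((ts j).occ Finset.univ) 1 = (ts j).occ Finset.univ :=
                    Nat.max_eq_left (Nat.one_le_iff_ne_zero.mpr hz)
                  omega
          have hmono : (PTerm.op i f).IsMonomial := by
            intro j
            rcases List.mem_cons.mp (h1 j j.isLt) with heq | hmemT
            · rw [heq, hhdef]
              exact PTerm.isMonomial_rename _ _ (hM j)
            · by_cases hz : (ts j).occ Finset.univ = 0
              · simp [hTTdef, hz] at hmemT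
              · simp only [hTTdef, hz, if_false] at hmemT
                rcases List.mem_cons.mp hmemT with heq2 | hmemE
                · rw [heq2]
                  exact PTerm.isMonomial_rename _ _ (hM j)
                · exact (hE1 j _ hmemE).1
          refine ⟨hmono, ?_⟩
          have hz1 : (ts j1).occ Finset.univ ≠ 0 := by
            intro hz
            simp [hTTdef, hz] at hj1T
          have hocc1 : (f j1).occ X + 1 ≤ (ts j1).occ Finset.univ := by
            simp only [hTTdef, hz1, if_false] at hj1T
            rcases List.mem_cons.mp hj1T with heq2 | hmemE
            · rw [heq2, hX, PTerm.occ_rename_natAdd]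
              omega
            · have hb1 := (hE1 j1 _ hmemE).2
              have hmax : max ((ts j1).occ Finset.univ) 1 = (ts j1).occ Finset.univ :=
                Nat.max_eq_left (Nat.one_le_iff_ne_zero.mpr hz1)
              omega
          have hsum1 : (PTerm.op i f).occ X + 1 ≤ (PTerm.op i ts).occ Finset.univ := by
            show (∑ j, (f j).occ X) + 1 ≤ ∑ j, (ts j).occ Finset.univ
            rw [← Finset.add_sum_erase _ (fun j => (f j).occ X) (Finset.mem_univ j1),
                ← Finset.add_sum_erase _ (fun j => (ts j).occ Finset.univ) (Finset.mem_univ j1)]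
            have hle := Finset.sum_le_sum
              (fun j (_ : j ∈ Finset.univ.erase j1) => hptocc j)
            omega
          have hmax : max ((PTerm.op i ts).occ Finset.univ) 1
              = (PTerm.op i ts).occ Finset.univ :=
            Nat.max_eq_left (Nat.one_le_iff_ne_zero.mpr he)
          omega
        · intro x y
          have hb := hsum (Fin.append x y)
          simp only [Fin.is_lt, if_true] at hb
          have hA : (ops i fun j => ((hh j :: TT j).map fun t =>
                t.eval ops (Fin.append x y)).sum) = (PTerm.op i ts).eval ops (x + y) := by
            show _ = ops i fun j => (ts j).eval ops (x + y)
            congr 1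
            funext j
            by_cases hz : (ts j).occ Finset.univ = 0
            · simp only [hTTdef, hhdef, hz, if_true, List.map_cons, List.map_nil,
                List.sum_cons, List.sum_nil, add_zero, PTerm.eval_rename, happL]
              exact PTerm.eval_congr_occ_zero ops _ hz x (x + y)
            · simp only [hTTdef, hhdef, hz, if_false, List.map_cons, List.sum_cons,
                PTerm.eval_rename, happL, happR]
              rw [hE2 j x y]
              abel
          have hB : (ops i fun j => (hh j).eval ops (Fin.append x y))
              = (PTerm.op i ts).eval ops x := by
            show _ = ops i fun j => (ts j).eval ops x
            congr 1
            funext j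
            simp only [hhdef, PTerm.eval_rename, happL]
          have hfyev : (PTerm.op i fy).eval ops (Fin.append x y)
              = (PTerm.op i ts).eval ops y := by
            show (ops i fun j => (fy j).eval ops (Fin.append x y))
              = ops i fun j => (ts j).eval ops y
            congr 1
            funext j
            by_cases hz : (ts j).occ Finset.univ = 0
            · simp only [hfy, hz, if_true, PTerm.eval_rename, happL]
              exact PTerm.eval_congr_occ_zero ops _ hz x y
            · simp only [hfy, hz, if_false, PTerm.eval_rename, happR]
          have hmm : PTerm.op i fy ∈ E₁.map (PTerm.op i) :=
            List.mem_map.mpr ⟨fy, hfyE, rfl⟩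
          have hperm : (E₁.map (PTerm.op i)).Perm
              (PTerm.op i fy :: (E₁.map (PTerm.op i)).erase (PTerm.op i fy)) :=
            List.perm_cons_erase hmm
          have hps : ((E₁.map (PTerm.op i)).map fun t => t.eval ops (Fin.append x y)).sum
              = (PTerm.op i fy).eval ops (Fin.append x y) +
                (((E₁.map (PTerm.op i)).erase (PTerm.op i fy)).map fun t =>
                  t.eval ops (Fin.append x y)).sum := by
            rw [List.Perm.sum_eq (hperm.map (fun t => t.eval ops (Fin.append x y)))]
            simp [List.map_cons, List.sum_cons]
          have hmapmap : ((E₁.map (PTerm.op i)).map fun t => t.eval ops (Fin.append x y))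
              = E₁.map fun f => ops i fun j => (f j).eval ops (Fin.append x y) := by
            rw [List.map_map]
            rfl
          have hfinal : (((E₁.map (PTerm.op i)).erase (PTerm.op i fy)).map fun t =>
              t.eval ops (Fin.append x y)).sum
              = ((E₁.map (PTerm.op i)).map fun t => t.eval ops (Fin.append x y)).sum
                - (PTerm.op i fy).eval ops (Fin.append x y) := by
            rw [hps]
            abel
          rw [hfinal, hmapmap, hb, hA, hB, hfyev]

lemma isPolynomial_of_isMonomial (t : PTerm K ι ar n) (h : t.IsMonomial) :
    t.IsPolynomial := by
  cases t with
  | var j => trivial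
  | const c => trivial
  | add s t => exact absurd h (by simp [PTerm.IsMonomial])
  | op i ts => exact h

open Classical in
lemma poly_expand [AddCommGroup K] {ops : ∀ i, (Fin (ar i) → K) → K} (hpoly : IsPolyring ops)
    (P : PTerm K ι ar n) :
    P.IsPolynomial →
    ∃ E : List (PTerm K ι ar (n + n)),
      (∀ t ∈ E, t.IsMonomial ∧
        t.occ (Finset.univ.image (Fin.castAdd n)) + 1 ≤ max (P.occ Finset.univ) 1) ∧
      ∀ x y : Fin n → K,
        (E.map fun t => t.eval ops (Fin.append x y)).sum =
          P.eval ops (x + y) - P.eval ops x - P.eval ops y := by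
  induction P with
  | var j => exact fun h => mono_expand hpoly _ h
  | const c => exact fun h => mono_expand hpoly _ h
  | op i ts ih => exact fun h => mono_expand hpoly _ h
  | add s t ihs iht =>
      intro h
      obtain ⟨hs, ht⟩ := h
      obtain ⟨Es, hEs1, hEs2⟩ := ihs hs
      obtain ⟨Et, hEt1, hEt2⟩ := iht ht
      refine ⟨Es ++ Et, ?_, ?_⟩
      · intro u hu
        rcases List.mem_append.mp hu with hu | hu
        · obtain ⟨h1, h2⟩ := hEs1 u hu
          refine ⟨h1, le_trans h2 ?_⟩
          show max (s.occ Finset.univ) 1 ≤ max (max (s.occ Finset.univ) (t.occ Finset.univ)) 1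
          omega
        · obtain ⟨h1, h2⟩ := hEt1 u hu
          refine ⟨h1, le_trans h2 ?_⟩
          show max (t.occ Finset.univ) 1 ≤ max (max (s.occ Finset.univ) (t.occ Finset.univ)) 1
          omega
      · intro x y
        rw [List.map_append, List.sum_append, hEs2 x y, hEt2 x y]
        show _ = (s.eval ops (x+y) + t.eval ops (x+y)) - (s.eval ops x + t.eval ops x)
          - (s.eval ops y + t.eval ops y)
        abel

def listSum [AddCommGroup K] : List (PTerm K ι ar n) → PTerm K ι ar n
  | [] => .const 0
  | t :: ts => .add t (listSum ts)

lemma eval_listSum [AddCommGroup K] (ops : ∀ i, (Fin (ar i) → K) → K)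
    (E : List (PTerm K ι ar n)) (b : Fin n → K) :
    (listSum E).eval ops b = (E.map fun t => t.eval ops b).sum := by
  induction E with
  | nil => simp [listSum, PTerm.eval]
  | cons t ts ih => simp [listSum, PTerm.eval, ih]

lemma isPolynomial_listSum [AddCommGroup K] (E : List (PTerm K ι ar n)) (h : ∀ t ∈ E, t.IsMonomial) :
    (listSum E).IsPolynomial := by
  induction E with
  | nil => trivial
  | cons t ts ih =>
      exact ⟨isPolynomial_of_isMonomial _ (h t (List.mem_cons_self)),
        ih fun u hu => h u (List.mem_cons_of_mem _ hu)⟩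

lemma occ_listSum_le [AddCommGroup K] (E : List (PTerm K ι ar n)) (V : Finset (Fin n)) (c : ℕ)
    (h : ∀ t ∈ E, t.occ V ≤ c) : (listSum E).occ V ≤ c := by
  induction E with
  | nil => simp [listSum, PTerm.occ]
  | cons t ts ih =>
      have h1 := h t (List.mem_cons_self)
      have h2 := ih fun u hu => h u (List.mem_cons_of_mem _ hu)
      show max (t.occ V) ((listSum ts).occ V) ≤ c
      omega


/-- In a polyring, every term of nonzero degree is "almost an endomorphism":
`F(x⃗+y⃗) = F(x⃗) + F(y⃗) + G(x⃗,y⃗)` for some term `G` in `2n` variables whose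
degree w.r.t. the first `n` variables is smaller than the degree of `F`. -/
theorem stmt_15 (K ι : Type) [AddCommGroup K] (ar : ι → ℕ)
    (ops : ∀ i, (Fin (ar i) → K) → K) (hpoly : IsPolyring ops)
    (n : ℕ) (F : PTerm K ι ar n)
    (hdeg : F.degree ops Finset.univ ≠ 0) :
    ∃ G : PTerm K ι ar (n + n),
      G.degree ops (Finset.univ.image (Fin.castAdd n)) < F.degree ops Finset.univ ∧
      ∀ x y : Fin n → K,
        F.eval ops (x + y) = F.eval ops x + F.eval ops y + G.eval ops (Fin.append x y) := by
  set d := F.degree ops Finset.univ with hd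
  have hne : {d' | ∃ P : PTerm K ι ar n, P.IsPolynomial ∧
      (∀ a, P.eval ops a = F.eval ops a) ∧ P.occ Finset.univ ≤ d'}.Nonempty := by
    by_contra hcon
    rw [Set.not_nonempty_iff_eq_empty] at hcon
    apply hdeg
    rw [hd, PTerm.degree, hcon, Nat.sInf_empty]
  have hmem := Nat.sInf_mem hne
  obtain ⟨P, hPpoly, hPeval, hPocc⟩ := hmem
  obtain ⟨E, hE1, hE2⟩ := poly_expand hpoly P hPpoly
  have hd1 : 1 ≤ d := Nat.one_le_iff_ne_zero.mpr hdeg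
  have hocc : ∀ t ∈ E, t.occ (Finset.univ.image (Fin.castAdd n)) ≤ d - 1 := by
    intro t ht
    have h2 := (hE1 t ht).2
    have h3 : max (P.occ Finset.univ) 1 ≤ d := by
      have : P.occ Finset.univ ≤ d := hPocc
      omega
    omega
  refine ⟨listSum E, ?_, ?_⟩
  · have hle : (listSum E).degree ops (Finset.univ.image (Fin.castAdd n)) ≤ d - 1 :=
      Nat.sInf_le ⟨listSum E, isPolynomial_listSum _ (fun t ht => (hE1 t ht).1),
        fun a => rfl, occ_listSum_le _ _ _ hocc⟩
    omega
  · intro x y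
    rw [eval_listSum, hE2 x y, hPeval, hPeval, hPeval]
    abel
end

section
/- Let K be a polyring and (a⃗ᵢ)_{i<ω} any sequence in Kⁿ. Then 0⃗ lies in the closure of FS(a⃗ᵢ)_{i<ω} in the Zariski topology of Kⁿ. -/
variable {K ι : Type} {ar : ι → ℕ} {n : ℕ}

/-! ### Auxiliary material for the proof -/

section Aux

/-- Discrete difference operator. -/
def Dlt {V W : Type*} [Add V] [Sub W] (f : V → W) (v : V) : V → W :=
  fun y => f (y + v) - f y

/-- `Deg k f` : all `(k+1)`-fold discrete differences of `f` vanish. -/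
def Deg {V W : Type*} [Add V] [Sub W] : ℕ → (V → W) → Prop
  | 0, f => ∀ y z, f y = f z
  | k + 1, f => ∀ v, Deg k (Dlt f v)

variable {V W : Type*} [AddCommGroup V] [AddCommGroup W]

theorem Deg_zero {f : V → W} : Deg 0 f ↔ ∀ y z, f y = f z := Iff.rfl

theorem Deg_succ {k : ℕ} {f : V → W} : Deg (k + 1) f ↔ ∀ v, Deg k (Dlt f v) := Iff.rfl

theorem deg_congr {k : ℕ} {f g : V → W} (h : ∀ y, f y = g y) (hf : Deg k f) : Deg k g := by
  have : f = g := funext h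
  rwa [this] at hf

theorem deg_succ_of {k : ℕ} {f : V → W} (hf : Deg k f) : Deg (k + 1) f := by
  induction k generalizing f with
  | zero =>
    rw [Deg_succ]
    intro v
    intro y z
    simp only [Dlt]
    rw [hf (y + v) (z + v), hf y z]
  | succ k ih =>
    rw [Deg_succ] at hf ⊢
    intro v
    exact ih (hf v)

theorem deg_mono {k k' : ℕ} {f : V → W} (h : k ≤ k') (hf : Deg k f) : Deg k' f := by
  induction k' with
  | zero => simpa [Nat.le_zero.mp h] using hf
  | succ k' ih =>
    rcases Nat.lt_or_ge k (k' + 1) with h' | h'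
    · exact deg_succ_of (ih (Nat.lt_succ_iff.mp h'))
    · have : k = k' + 1 := le_antisymm h h'
      rwa [this] at hf

theorem deg_const {k : ℕ} (c : W) : Deg k (fun _ : V => c) :=
  deg_mono (Nat.zero_le _) (fun _ _ => rfl)

theorem deg_add {k : ℕ} {f g : V → W} (hf : Deg k f) (hg : Deg k g) :
    Deg k (fun y => f y + g y) := by
  induction k generalizing f g with
  | zero =>
    intro y z
    show f y + g y = f z + g z
    rw [hf y z, hg y z]
  | succ k ih =>
    rw [Deg_succ]
    intro v
    have hrw : Dlt (fun y => f y + g y) v = fun y => Dlt f v y + Dlt g v y := by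
      funext y; simp only [Dlt]; abel
    rw [hrw]
    exact ih (hf v) (hg v)

theorem deg_sum {k : ℕ} {α : Type*} (s : Finset α) (F : α → V → W)
    (h : ∀ m ∈ s, Deg k (F m)) : Deg k (fun y => ∑ m ∈ s, F m y) := by
  classical
  induction s using Finset.induction_on with
  | empty => exact deg_congr (fun y => by simp) (deg_const 0)
  | @insert a s ha ih =>
    have h1 : Deg k (F a) := h a (Finset.mem_insert_self _ _)
    have h2 : Deg k (fun y => ∑ m ∈ s, F m y) :=
      ih fun m hm => h m (Finset.mem_insert_of_mem hm)
    exact deg_congr (fun y => by rw [Finset.sum_insert ha]) (deg_add h1 h2)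

theorem deg_translate {k : ℕ} {f : V → W} (v : V) (hf : Deg k f) :
    Deg k (fun y => f (y + v)) := by
  induction k generalizing f with
  | zero => intro y z; exact hf _ _
  | succ k ih =>
    rw [Deg_succ]
    intro w
    have hrw : Dlt (fun y => f (y + v)) w = fun y => Dlt f w (y + v) := by
      funext y; simp only [Dlt]; rw [add_right_comm]
    rw [hrw]
    exact ih (hf w)

/-- The alternating-sum identity for functions of bounded degree. -/
theorem alt_sum (D : ℕ) (f : V → W) (hf : Deg D f) :
    ∀ (s : Finset ℕ) (x : ℕ → V), D < s.card →
      ∑ E ∈ s.powerset, (-1 : ℤ) ^ E.card • f (∑ i ∈ E, x i) = 0 := by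
  induction D generalizing f with
  | zero =>
    intro s x hcard
    calc ∑ E ∈ s.powerset, (-1 : ℤ) ^ E.card • f (∑ i ∈ E, x i)
        = ∑ E ∈ s.powerset, (-1 : ℤ) ^ E.card • f 0 :=
          Finset.sum_congr rfl fun E _ => by rw [hf (∑ i ∈ E, x i) 0]
      _ = (∑ E ∈ s.powerset, (-1 : ℤ) ^ E.card) • f 0 := (Finset.sum_smul).symm
      _ = 0 := by
          rw [Finset.sum_powerset_neg_one_pow_card_of_nonempty
            (Finset.card_pos.mp hcard), zero_smul]
  | succ D IH =>
    intro s x hcard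
    have hne : s.Nonempty := Finset.card_pos.mp (by omega)
    obtain ⟨j, hj⟩ := hne
    have hct : D < (s.erase j).card := by
      have := Finset.card_erase_of_mem hj; omega
    rw [← Finset.insert_erase hj,
      Finset.sum_powerset_insert (Finset.notMem_erase j s), ← Finset.sum_add_distrib]
    have hstep : ∀ E ∈ (s.erase j).powerset,
        (-1 : ℤ) ^ E.card • f (∑ i ∈ E, x i)
          + (-1 : ℤ) ^ (insert j E).card • f (∑ i ∈ insert j E, x i)
        = -((-1 : ℤ) ^ E.card • Dlt f (x j) (∑ i ∈ E, x i)) := by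
      intro E hE
      have hjE : j ∉ E := fun hc =>
        Finset.notMem_erase j s (Finset.mem_powerset.mp hE hc)
      rw [Finset.card_insert_of_notMem hjE, Finset.sum_insert hjE,
        add_comm (x j) (∑ i ∈ E, x i)]
      simp only [Dlt, pow_succ, mul_neg_one, neg_smul, smul_sub]
      abel
    rw [Finset.sum_congr rfl hstep]
    have : ∑ E ∈ (s.erase j).powerset,
        -((-1 : ℤ) ^ E.card • Dlt f (x j) (∑ i ∈ E, x i))
        = -∑ E ∈ (s.erase j).powerset,
            (-1 : ℤ) ^ E.card • Dlt f (x j) (∑ i ∈ E, x i) := by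
      rw [Finset.sum_neg_distrib]
    rw [this, IH (Dlt f (x j)) (hf (x j)) (s.erase j) x hct, neg_zero]

variable {K ι : Type} {ar : ι → ℕ} {n : ℕ} [AddCommGroup K]
variable (ops : ∀ i, (Fin (ar i) → K) → K)

theorem ops_eq_zero (hpoly : IsPolyring ops) (i : ι) (t : Fin (ar i) → K)
    (j : Fin (ar i)) (hj : t j = 0) : ops i t = 0 := by
  have h := hpoly i j t 0 0
  rw [add_zero] at h
  have h2 : ops i (Function.update t j 0) = 0 := left_eq_add.mp h
  have h3 : Function.update t j 0 = t := by rw [← hj]; exact Function.update_eq_self j t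
  rwa [h3] at h2

theorem ops_update_sub (hpoly : IsPolyring ops) (i : ι) (t : Fin (ar i) → K)
    (j : Fin (ar i)) (x y : K) :
    ops i (Function.update t j (x - y)) =
      ops i (Function.update t j x) - ops i (Function.update t j y) := by
  have h := hpoly i j t (x - y) y
  rw [sub_add_cancel] at h
  exact eq_sub_of_add_eq h.symm

theorem ops_update_sub' (hpoly : IsPolyring ops) (i : ι) (t : Fin (ar i) → K)
    (j : Fin (ar i)) (x : K) :
    ops i (Function.update t j x) - ops i t =
      ops i (Function.update t j (x - t j)) := by
  have h := ops_update_sub ops hpoly i t j x (t j)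
  rwa [Function.update_eq_self, eq_comm] at h

/-- Composition with a multiadditive operation adds up degrees. -/
theorem deg_comp (hpoly : IsPolyring ops) :
    ∀ (N : ℕ) (i : ι) (f : Fin (ar i) → ((Fin n → K) → K)) (k : Fin (ar i) → ℕ),
      (∀ j, Deg (k j) (f j)) → (∑ j, k j) ≤ N →
      Deg N (fun y => ops i fun j => f j y) := by
  intro N
  induction N with
  | zero =>
    intro i f k hf hsum
    have hk : ∀ j, k j = 0 := by
      intro j
      have := Finset.single_le_sum (f := k) (fun _ _ => Nat.zero_le _) (Finset.mem_univ j)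
      omega
    intro y z
    show (ops i fun j => f j y) = ops i fun j => f j z
    congr 1
    funext j
    have hfj : Deg 0 (f j) := by rw [← hk j]; exact hf j
    exact hfj y z
  | succ N IH =>
    intro i f k hf hsum
    rw [Deg_succ]
    intro v
    -- the telescoping decomposition of the difference
    have key : Dlt (fun y => ops i fun j => f j y) v = fun y =>
        ∑ m ∈ Finset.range (ar i),
          (if h : m < ar i then
            ops i (Function.update
              (fun l : Fin (ar i) => if (l : ℕ) < m then f l (y + v) else f l y)
              ⟨m, h⟩ (Dlt (f ⟨m, h⟩) v y))
          else 0) := by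
      funext y
      have tele := Finset.sum_range_sub
        (fun m => ops i fun l : Fin (ar i) => if (l : ℕ) < m then f l (y + v) else f l y)
        (ar i)
      have e1 : (fun l : Fin (ar i) => if (l : ℕ) < ar i then f l (y + v) else f l y)
          = fun l => f l (y + v) := by
        funext l; exact if_pos l.isLt
      have e0 : (fun l : Fin (ar i) => if (l : ℕ) < 0 then f l (y + v) else f l y)
          = fun l => f l y := by
        funext l; exact if_neg (Nat.not_lt_zero _)
      rw [e1, e0] at tele
      rw [show Dlt (fun y => ops i fun j => f j y) v y
          = ops i (fun j => f j (y + v)) - ops i (fun j => f j y) from rfl, ← tele]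
      apply Finset.sum_congr rfl
      intro m hm
      have h : m < ar i := Finset.mem_range.mp hm
      rw [dif_pos h]
      have eA : (fun l : Fin (ar i) => if (l : ℕ) < m + 1 then f l (y + v) else f l y)
          = Function.update
              (fun l : Fin (ar i) => if (l : ℕ) < m then f l (y + v) else f l y)
              ⟨m, h⟩ (f ⟨m, h⟩ (y + v)) := by
        funext l
        rcases eq_or_ne l ⟨m, h⟩ with rfl | hne
        · simp [Nat.lt_succ_self]
        · have hval : (l : ℕ) ≠ m := fun hc => hne (Fin.ext hc)
          rw [Function.update_of_ne hne]
          by_cases hlt : (l : ℕ) < m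
          · rw [if_pos hlt, if_pos (Nat.lt_succ_of_lt hlt)]
          · rw [if_neg hlt, if_neg (by omega)]
      rw [eA, ops_update_sub' ops hpoly]
      congr 1
      have hbase : (if ((⟨m, h⟩ : Fin (ar i)) : ℕ) < m then f ⟨m, h⟩ (y + v)
          else f ⟨m, h⟩ y) = f ⟨m, h⟩ y := by
        simp
      rw [hbase]
      rfl
    rw [key]
    apply deg_sum
    intro m hm
    have h : m < ar i := Finset.mem_range.mp hm
    cases hkm : k ⟨m, h⟩ with
    | zero =>
      have hconst : Deg 0 (f ⟨m, h⟩) := by rw [← hkm]; exact hf ⟨m, h⟩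
      have hz : ∀ y, Dlt (f ⟨m, h⟩) v y = 0 := fun y =>
        sub_eq_zero.mpr (hconst (y + v) y)
      have hzero : (fun y => (if h' : m < ar i then
            ops i (Function.update
              (fun l : Fin (ar i) => if (l : ℕ) < m then f l (y + v) else f l y)
              ⟨m, h'⟩ (Dlt (f ⟨m, h'⟩) v y))
          else 0)) = fun _ => (0 : K) := by
        funext y
        rw [dif_pos h, hz y]
        exact ops_eq_zero ops hpoly i _ ⟨m, h⟩ (Function.update_self _ _ _)
      rw [hzero]
      exact deg_const 0
    | succ km =>
      have hGdeg : ∀ l, Deg (Function.update k ⟨m, h⟩ km l)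
          ((Function.update
            (fun l : Fin (ar i) => if (l : ℕ) < m then (fun y => f l (y + v)) else f l)
            ⟨m, h⟩ (Dlt (f ⟨m, h⟩) v)) l) := by
        intro l
        rcases eq_or_ne l ⟨m, h⟩ with rfl | hne
        · rw [Function.update_self, Function.update_self]
          have hl := hf (⟨m, h⟩ : Fin (ar i))
          rw [hkm, Deg_succ] at hl
          exact hl v
        · rw [Function.update_of_ne hne, Function.update_of_ne hne]
          by_cases hlt : (l : ℕ) < m
          · rw [if_pos hlt]; exact deg_translate v (hf l)
          · rw [if_neg hlt]; exact hf l
      have hκsum : (∑ l, Function.update k ⟨m, h⟩ km l) ≤ N := by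
        have h1 : ∑ l, Function.update k ⟨m, h⟩ km l
            = km + ∑ l ∈ Finset.univ \ {⟨m, h⟩}, k l :=
          Finset.sum_update_of_mem (Finset.mem_univ _) k km
        have h2 : k ⟨m, h⟩ + ∑ l ∈ Finset.univ.erase ⟨m, h⟩, k l = ∑ l, k l :=
          Finset.add_sum_erase _ _ (Finset.mem_univ _)
        rw [← Finset.erase_eq] at h1
        omega
      have hIH := IH i _ _ hGdeg hκsum
      have hEq : (fun y => (if h' : m < ar i then
            ops i (Function.update
              (fun l : Fin (ar i) => if (l : ℕ) < m then f l (y + v) else f l y)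
              ⟨m, h'⟩ (Dlt (f ⟨m, h'⟩) v y))
          else 0)) = fun y => ops i fun l =>
            (Function.update
              (fun l : Fin (ar i) => if (l : ℕ) < m then (fun y => f l (y + v)) else f l)
              ⟨m, h⟩ (Dlt (f ⟨m, h⟩) v)) l y := by
        funext y
        rw [dif_pos h]
        congr 1
        funext l
        rcases eq_or_ne l ⟨m, h⟩ with rfl | hne
        · rw [Function.update_self, Function.update_self]
        · rw [Function.update_of_ne hne, Function.update_of_ne hne]
          by_cases hlt : (l : ℕ) < m
          · rw [if_pos hlt, if_pos hlt]
          · rw [if_neg hlt, if_neg hlt]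
      rw [hEq]
      exact hIH

/-- Every term evaluates to a function of degree at most its occurrence count. -/
theorem deg_eval (hpoly : IsPolyring ops) :
    ∀ F : PTerm K ι ar n, Deg (F.occ Finset.univ) (F.eval ops) := by
  intro F
  induction F with
  | var j =>
    have hocc : (PTerm.var j : PTerm K ι ar n).occ Finset.univ = 1 := by
      simp [PTerm.occ]
    rw [hocc, Deg_succ]
    intro v
    intro y z
    simp only [Dlt, PTerm.eval, Pi.add_apply]
    abel
  | const c =>
    simp only [PTerm.occ]
    intro y z
    rfl
  | add s t ihs iht =>
    simp only [PTerm.occ]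
    have h1 : Deg (max (s.occ Finset.univ) (t.occ Finset.univ)) (s.eval ops) :=
      deg_mono (le_max_left _ _) ihs
    have h2 : Deg (max (s.occ Finset.univ) (t.occ Finset.univ)) (t.eval ops) :=
      deg_mono (le_max_right _ _) iht
    exact deg_congr (fun y => rfl) (deg_add h1 h2)
  | op i ts ih =>
    simp only [PTerm.occ]
    exact deg_congr (fun y => rfl)
      (deg_comp ops hpoly (∑ j, (ts j).occ Finset.univ) i
        (fun j => (ts j).eval ops) (fun j => (ts j).occ Finset.univ) ih le_rfl)

/-- Every finite sum in a stream is a sum over a nonempty finite index set. -/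
theorem FS_subset_sums {M : Type*} [AddCommMonoid M] (a : Stream' M) (m : M)
    (hm : m ∈ Hindman.FS a) :
    ∃ S : Finset ℕ, S.Nonempty ∧ m = ∑ i ∈ S, a.get i := by
  induction hm with
  | head' a =>
    exact ⟨{0}, ⟨0, Finset.mem_singleton_self 0⟩, by simp [Stream'.head]⟩
  | tail' a m _ ih =>
    obtain ⟨S, hS, rfl⟩ := ih
    refine ⟨S.image Nat.succ, hS.image _, ?_⟩
    rw [Finset.sum_image (fun x _ y _ h => Nat.succ_injective h)]
    exact Finset.sum_congr rfl fun i _ => rfl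
  | cons' a m _ ih =>
    obtain ⟨S, hS, rfl⟩ := ih
    refine ⟨insert 0 (S.image Nat.succ), ⟨0, Finset.mem_insert_self _ _⟩, ?_⟩
    rw [Finset.sum_insert (by simp), Finset.sum_image (fun x _ y _ h => Nat.succ_injective h)]
    exact congrArg₂ (· + ·) rfl (Finset.sum_congr rfl fun i _ => rfl)

end Aux

/-- For any sequence `(a⃗ᵢ)_{i<ω}` in `Kⁿ` over a polyring `K`, the zero vector
lies in the Zariski closure of the set `FS(a⃗ᵢ)` of nonempty finite subset
sums. -/
theorem stmt_17 (K ι : Type) [AddCommGroup K] (ar : ι → ℕ)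
    (ops : ∀ i, (Fin (ar i) → K) → K) (hpoly : IsPolyring ops)
    (n : ℕ) (a : ℕ → Fin n → K) :
    (0 : Fin n → K) ∈ @closure _ (zariskiTopology ops n)
      {b | ∃ S : Finset ℕ, S.Nonempty ∧ b = ∑ i ∈ S, a i} := by
  classical
  have hbasis := @TopologicalSpace.isTopologicalBasis_of_subbasis _ (zariskiTopology ops n)
    {U | ∃ F : PTerm K ι ar n, U = {a | F.eval ops a = 0}ᶜ} rfl
  rw [@TopologicalSpace.IsTopologicalBasis.mem_closure_iff _ (zariskiTopology ops n) _ hbasis _ _]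
  rintro o ⟨fs, ⟨hfin, hsub⟩, rfl⟩ h0
  by_contra hemp
  rw [Set.not_nonempty_iff_eq_empty] at hemp
  -- the stream of vectors
  have hcov : Hindman.FS (a : Stream' (Fin n → K)) ⊆ ⋃₀ (compl '' fs) := by
    intro m hm
    obtain ⟨S, hS, rfl⟩ := FS_subset_sums (a : Stream' (Fin n → K)) m hm
    have hmem : (∑ i ∈ S, a i) ∈ {b | ∃ S : Finset ℕ, S.Nonempty ∧ b = ∑ i ∈ S, a i} :=
      ⟨S, hS, rfl⟩
    have hnot : (∑ i ∈ S, a i) ∉ ⋂₀ fs := fun hin =>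
      Set.eq_empty_iff_forall_notMem.mp hemp _ ⟨hin, hmem⟩
    rw [Set.mem_sInter] at hnot
    push_neg at hnot
    obtain ⟨U, hU, hnU⟩ := hnot
    exact ⟨Uᶜ, ⟨U, hU, rfl⟩, hnU⟩
  obtain ⟨c, ⟨U, hU, rfl⟩, b, hb⟩ :=
    Hindman.FS_partition_regular (a : Stream' (Fin n → K)) _ (hfin.image _) hcov
  obtain ⟨F, rfl⟩ := hsub hU
  rw [compl_compl] at hb
  have h0U : F.eval ops 0 ≠ 0 := by
    have := Set.mem_sInter.mp h0 _ hU
    simpa using this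
  -- the alternating sum identity yields a contradiction
  have hdeg : Deg (F.occ Finset.univ) (F.eval ops) := deg_eval ops hpoly F
  have halt := alt_sum (F.occ Finset.univ) (F.eval ops) hdeg
    (Finset.range (F.occ Finset.univ + 1)) (fun i => b i) (by simp)
  rw [Finset.sum_eq_single_of_mem ∅ (Finset.empty_mem_powerset _) ?_] at halt
  · apply h0U
    simp at halt
    convert halt using 2
    exact Finset.sum_empty.symm
  · intro E _ hne
    have hEFS : (∑ i ∈ E, b i) ∈ Hindman.FS b := by
      have := Hindman.FS.finset_sum b E (Finset.nonempty_iff_ne_empty.mpr hne)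
      simpa [Stream'.get] using this
    have hz : F.eval ops (∑ i ∈ E, b i) = 0 := hb hEFS
    rw [hz, smul_zero]
end

section
/- (Key Theorem) Let K be an infinite polyring, n ≥ 1, and A ⊆ Kⁿ finite-valued, meaning there is an index j < n such that for every fixing of the other n−1 coordinates, the set of j-th coordinates a_j with (a₀,…,a_{n-1}) ∈ A is finite. Then A has empty interior in the Zariski topology of Kⁿ. -/
variable {K ι : Type} {ar : ι → ℕ} {n : ℕ}

section GPoly
variable {G : Type} [AddCommGroup G]

/-- Generalized polynomial (finite-difference degree). -/
def IsGPoly : ℕ → (G → G) → Prop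
  | 0, f => ∀ x y, f x = f y
  | d+1, f => ∀ c, IsGPoly d fun x => f (x + c) - f x

theorem isGPoly_zero_iff (f : G → G) : IsGPoly 0 f ↔ ∀ x y, f x = f y := Iff.rfl

theorem isGPoly_succ_iff (d : ℕ) (f : G → G) :
    IsGPoly (d+1) f ↔ ∀ c, IsGPoly d fun x => f (x + c) - f x := Iff.rfl

theorem IsGPoly.congr {d : ℕ} {f g : G → G} (h : IsGPoly d f) (he : ∀ x, f x = g x) :
    IsGPoly d g := (funext he : f = g) ▸ h

theorem isGPoly_const (k : G) : IsGPoly 0 (fun _ => k) := fun _ _ => rfl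

theorem IsGPoly.mono {d : ℕ} {f : G → G} (h : IsGPoly d f) : IsGPoly (d+1) f := by
  induction d generalizing f with
  | zero => intro c x y; dsimp only; rw [h (x + c) (y + c), h x y]
  | succ d ih => intro c; exact ih (h c)

theorem IsGPoly.mono_le {d e : ℕ} {f : G → G} (hde : d ≤ e) (h : IsGPoly d f) : IsGPoly e f := by
  induction hde with
  | refl => exact h
  | step _ ih => exact ih.mono

theorem IsGPoly.add {d : ℕ} {f g : G → G} (hf : IsGPoly d f) (hg : IsGPoly d g) :
    IsGPoly d fun x => f x + g x := by
  induction d generalizing f g with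
  | zero => intro x y; dsimp only; rw [hf x y, hg x y]
  | succ d ih =>
    intro c
    exact (ih (hf c) (hg c)).congr fun x => by dsimp only; abel

theorem isGPoly_zero_fun (d : ℕ) : IsGPoly d (fun _ => (0:G)) :=
  (isGPoly_const 0).mono_le (Nat.zero_le d)

theorem IsGPoly.finsetSum {α : Type*} (s : Finset α) (F : α → G → G) (d : ℕ)
    (h : ∀ a ∈ s, IsGPoly d (F a)) : IsGPoly d fun x => ∑ a ∈ s, F a x := by
  classical
  induction s using Finset.induction with
  | empty => exact (isGPoly_zero_fun d).congr fun x => by simp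
  | @insert a s ha ih =>
    exact ((h a (Finset.mem_insert_self a s)).add
      (ih fun b hb => h b (Finset.mem_insert_of_mem hb))).congr
      fun x => (Finset.sum_insert (f := fun a => F a x) ha).symm

theorem IsGPoly.translate {d : ℕ} {f : G → G} (h : IsGPoly d f) (t : G) :
    IsGPoly d fun x => f (x + t) := by
  induction d generalizing f with
  | zero => intro x y; exact h _ _
  | succ d ih =>
    intro c
    exact (ih (h c)).congr fun x => by rw [add_right_comm]

theorem isGPoly_id : IsGPoly 1 (fun x : G => x) := by
  intro c x y; simp

theorem IsGPoly.eq_zero_of_subset_sums {d : ℕ} {f : G → G} (h : IsGPoly d f) (a : G) (c : ℕ → G)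
    (hv : ∀ S : Finset ℕ, S.Nonempty → S ⊆ Finset.range (d+1) → f (a + ∑ i ∈ S, c i) = 0) :
    f a = 0 := by
  induction d generalizing f a with
  | zero =>
    have h1 := hv {0} (Finset.singleton_nonempty 0) (by simp)
    rw [h a (a + ∑ i ∈ ({0} : Finset ℕ), c i)]
    exact h1
  | succ d ih =>
    have hg : IsGPoly d fun x => f (x + c (d+1)) - f x := h (c (d+1))
    have hga : f (a + c (d+1)) - f a = 0 := by
      refine ih hg a ?_
      intro S hS hSsub
      have hd1 : (d+1) ∉ S := fun hmem => by
        have := Finset.mem_range.mp (hSsub hmem); omega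
      have h1 : f (a + ∑ i ∈ S, c i + c (d+1)) = 0 := by
        have h2 := hv (insert (d+1) S) (Finset.insert_nonempty _ _)
          (Finset.insert_subset_iff.mpr ⟨Finset.mem_range.mpr (by omega),
            hSsub.trans (Finset.range_subset_range.mpr (by omega))⟩)
        rw [Finset.sum_insert hd1] at h2
        have he : a + ∑ i ∈ S, c i + c (d+1) = a + (c (d+1) + ∑ i ∈ S, c i) := by abel
        rw [he]; exact h2
      have h2 : f (a + ∑ i ∈ S, c i) = 0 :=
        hv S hS (hSsub.trans (Finset.range_subset_range.mpr (by omega)))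
      show f (a + ∑ i ∈ S, c i + c (d+1)) - f (a + ∑ i ∈ S, c i) = 0
      rw [h1, h2, sub_zero]
    have h3 : f (a + c (d+1)) = 0 := by
      have := hv {d+1} (Finset.singleton_nonempty _) (by simp)
      simpa using this
    rw [h3, zero_sub, neg_eq_zero] at hga
    exact hga

end GPoly

section Ops
variable [AddCommGroup K] {ops : ∀ i, (Fin (ar i) → K) → K}

theorem ops_zero_slot (hpoly : IsPolyring ops) (i : ι) (v : Fin (ar i) → K) (t : Fin (ar i))
    (hv : v t = 0) : ops i v = 0 := by
  have h := hpoly i t v 0 0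
  rw [add_zero] at h
  have h0 : ops i (Function.update v t 0) = 0 := by
    have h2 : ops i (Function.update v t 0) + ops i (Function.update v t 0)
        = ops i (Function.update v t 0) + 0 := by rw [add_zero]; exact h.symm
    exact add_left_cancel h2
  rwa [show Function.update v t 0 = v from by rw [← hv, Function.update_eq_self]] at h0

theorem isGPoly_ops (hpoly : IsPolyring ops) :
    ∀ (N : ℕ) (i : ι) (g : Fin (ar i) → K → K) (d : Fin (ar i) → ℕ),
    (∀ j, IsGPoly (d j) (g j)) → (∑ j, d j) ≤ N →
    IsGPoly N fun x => ops i fun j => g j x := by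
  intro N
  induction N with
  | zero =>
    intro i g d hg hsum
    have hd0 : ∀ j, d j = 0 := by
      intro j
      have := Finset.single_le_sum (f := d) (fun j _ => Nat.zero_le (d j)) (Finset.mem_univ j)
      omega
    intro x y
    dsimp only
    congr 1
    funext j
    have hj := hg j
    rw [hd0 j] at hj
    exact hj x y
  | succ N ih =>
    intro i g d hg hsum c
    set T : ℕ → K → K := fun t x => ops i (fun j => if (j:ℕ) < t then g j (x + c) else g j x)
      with hT
    have key : ∀ x, (fun x => ops i fun j => g j x) (x + c) - (fun x => ops i fun j => g j x) x
        = ∑ t ∈ Finset.range (ar i), (T (t+1) x - T t x) := by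
      intro x
      rw [Finset.sum_range_sub (fun t => T t x)]
      dsimp only
      have e1 : T (ar i) x = ops i fun j => g j (x + c) := by simp [hT, Fin.is_lt]
      have e2 : T 0 x = ops i fun j => g j x := by simp [hT]
      rw [e1, e2]
    have hterm : ∀ t, t < ar i → IsGPoly N (fun x => T (t+1) x - T t x) := by
      intro t ht
      set tf : Fin (ar i) := ⟨t, ht⟩ with htf
      set g' : Fin (ar i) → K → K := fun j =>
        if (j:ℕ) < t then (fun x => g j (x + c))
        else if j = tf then (fun x => g tf (x + c) - g tf x) else g j with hg'
      have hpt : ∀ x, T (t+1) x - T t x = ops i (fun j => g' j x) := by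
        intro x
        set v : Fin (ar i) → K := fun j => if (j:ℕ) < t then g j (x + c) else g j x with hv
        have hvt : v tf = g tf x := by simp [hv, htf]
        have hTt : T t x = ops i (Function.update v tf (g tf x)) := by
          rw [← hvt, Function.update_eq_self]
        have hTt1 : T (t+1) x
            = ops i (Function.update v tf (g tf x + (g tf (x + c) - g tf x))) := by
          rw [add_sub_cancel]
          show ops i (fun j => if (j:ℕ) < t + 1 then g j (x + c) else g j x) = _
          congr 1
          funext j
          by_cases hj : j = tf
          · subst hj
            simp [hv, htf, Function.update_self]
          · rw [Function.update_of_ne hj]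
            have hjt : (j : ℕ) ≠ t := by
              intro hh
              exact hj (Fin.ext hh)
            by_cases h1 : (j:ℕ) < t
            · simp [hv, h1, Nat.lt_succ_of_lt h1]
            · have h2 : ¬ (j:ℕ) < t + 1 := by omega
              simp [hv, h1, h2]
        rw [hTt1, hTt, hpoly i tf v (g tf x) (g tf (x + c) - g tf x), add_sub_cancel_left]
        congr 1
        funext j
        by_cases hj : j = tf
        · subst hj; simp [hg', Function.update_self, htf]
        · have hjt : ¬ ((j:ℕ) < t ∧ False) := by simp
          rw [Function.update_of_ne hj]
          simp only [hg', hv]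
          by_cases h1 : (j:ℕ) < t
          · simp [h1]
          · simp [h1, hj]
      by_cases hdt : d tf = 0
      · have hconst := hg tf
        rw [hdt] at hconst
        have hz : ∀ x, T (t+1) x - T t x = 0 := by
          intro x
          rw [hpt x]
          refine ops_zero_slot hpoly i _ tf ?_
          have : g' tf = fun x => g tf (x + c) - g tf x := by
            simp [hg', htf]
          rw [this]
          exact sub_eq_zero.mpr (hconst _ _)
        exact (isGPoly_zero_fun N).congr fun x => (hz x).symm
      · obtain ⟨e, he⟩ := Nat.exists_eq_succ_of_ne_zero hdt
        set d' : Fin (ar i) → ℕ := Function.update d tf e with hd'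
        have hg'' : ∀ j, IsGPoly (d' j) (g' j) := by
          intro j
          by_cases h2 : j = tf
          · have hjt : ¬ (j:ℕ) < t := by rw [h2]; exact lt_irrefl t
            have h3 : g' j = fun x => g tf (x + c) - g tf x := by
              rw [hg']; dsimp only; rw [if_neg hjt, if_pos h2]
            have h4 : d' j = e := by rw [hd', h2, Function.update_self]
            rw [h3, h4]
            have h5 := hg tf
            rw [he] at h5
            exact h5 c
          · have h4 : d' j = d j := by simp [hd', h2]
            rw [h4]
            by_cases h1 : (j:ℕ) < t
            · have h3 : g' j = fun x => g j (x + c) := by simp [hg', h1]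
              rw [h3]
              exact (hg j).translate c
            · have h3 : g' j = g j := by simp [hg', h1, h2]
              rw [h3]
              exact hg j
        have hsum' : ∑ j, d' j ≤ N := by
          have h1 : ∑ j, d' j = e + ∑ j ∈ Finset.univ \ {tf}, d j := by
            rw [hd']
            exact Finset.sum_update_of_mem (Finset.mem_univ tf) d e
          have h2 : ∑ j, d j = d tf + ∑ j ∈ Finset.univ \ {tf}, d j := by
            rw [Finset.sdiff_singleton_eq_erase]
            exact (Finset.add_sum_erase _ _ (Finset.mem_univ tf)).symm
          omega
        exact (ih i g' d' hg'' hsum').congr fun x => (hpt x).symm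
    exact (IsGPoly.finsetSum _ _ N (fun t ht => hterm t (Finset.mem_range.mp ht))).congr
      fun x => (key x).symm

theorem exists_isGPoly_term (hpoly : IsPolyring ops) (F : PTerm K ι ar n) (a : Fin n → K)
    (j : Fin n) : ∃ d, IsGPoly d fun x => F.eval ops (Function.update a j x) := by
  induction F with
  | var i =>
    by_cases h : i = j
    · subst h
      exact ⟨1, isGPoly_id.congr fun x => by simp [PTerm.eval]⟩
    · exact ⟨0, (isGPoly_const (a i)).congr fun x => by
        simp [PTerm.eval, Function.update_of_ne h]⟩
  | const k => exact ⟨0, (isGPoly_const k).congr fun x => rfl⟩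
  | add s t ihs iht =>
    obtain ⟨ds, hs⟩ := ihs
    obtain ⟨dt, ht⟩ := iht
    exact ⟨max ds dt, ((hs.mono_le (le_max_left ds dt)).add
      (ht.mono_le (le_max_right ds dt))).congr fun x => rfl⟩
  | op i ts ih =>
    choose d hd using ih
    exact ⟨∑ j', d j',
      (isGPoly_ops hpoly _ i (fun j' x => (ts j').eval ops (Function.update a j x)) d hd
        le_rfl).congr fun x => rfl⟩

end Ops

section Stream
set_option linter.unusedSectionVars false
variable {G : Type} [AddCommGroup G] [Infinite G]
attribute [local instance] Classical.decEq

def GoodF (s : Finset G) : Prop := ∀ t ⊆ s, t.Nonempty → ∑ x ∈ t, x ≠ 0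

theorem goodF_empty : GoodF (∅ : Finset G) := by
  intro t ht htne
  rw [Finset.subset_empty.mp ht] at htne
  exact absurd htne (by simp)

theorem goodF_step {s : Finset G} (hs : GoodF s) : ∃ x, x ∉ s ∧ GoodF (insert x s) := by
  classical
  obtain ⟨x, hx⟩ :=
    Infinite.exists_notMem_finset (s ∪ s.powerset.image fun t => -∑ y ∈ t, y)
  refine ⟨x, fun h => hx (Finset.mem_union_left _ h), ?_⟩
  intro t ht htne
  by_cases hxt : x ∈ t
  · have hsub : t.erase x ⊆ s := by
      intro y hy
      have h1 := Finset.mem_of_mem_erase hy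
      have h2 := Finset.ne_of_mem_erase hy
      rcases Finset.mem_insert.mp (ht h1) with h | h
      · exact absurd h h2
      · exact h
    rw [← Finset.insert_erase hxt, Finset.sum_insert (Finset.notMem_erase _ _)]
    intro h0
    apply hx
    apply Finset.mem_union_right
    exact Finset.mem_image.mpr ⟨t.erase x, Finset.mem_powerset.mpr hsub,
      neg_eq_of_add_eq_zero_left h0⟩
  · exact hs t (fun y hy => (Finset.mem_insert.mp (ht hy)).resolve_left
      fun he => hxt (he ▸ hy)) htne

noncomputable def chainStep : {s : Finset G // GoodF s} → {s : Finset G // GoodF s} :=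
  fun p => ⟨insert (Classical.choose (goodF_step p.2)) p.1,
    (Classical.choose_spec (goodF_step p.2)).2⟩

noncomputable def chain : ℕ → {s : Finset G // GoodF s} :=
  fun m => chainStep^[m] ⟨∅, goodF_empty⟩

noncomputable def useq (m : ℕ) : G := Classical.choose (goodF_step (chain m).2)

theorem chain_succ (m : ℕ) : (chain (m+1) : {s : Finset G // GoodF s}).1
    = insert (useq m) (chain m).1 := by
  show (chainStep^[m+1] _).1 = _
  rw [Function.iterate_succ_apply']
  rfl

theorem useq_not_mem (m : ℕ) : (useq m : G) ∉ (chain m).1 :=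
  (Classical.choose_spec (goodF_step (chain m).2)).1

theorem chain_mono {m m' : ℕ} (h : m ≤ m') :
    ((chain m : {s : Finset G // GoodF s})).1 ⊆ (chain m').1 := by
  induction h with
  | refl => exact Finset.Subset.refl _
  | @step m'' h ih =>
    refine ih.trans ?_
    rw [chain_succ m'']
    exact Finset.subset_insert _ _

theorem useq_mem (m : ℕ) : (useq m : G) ∈ (chain (m+1)).1 := by
  rw [chain_succ]
  exact Finset.mem_insert_self _ _

theorem useq_inj : Function.Injective (useq : ℕ → G) := by
  intro a b hab
  by_contra hne
  rcases Nat.lt_or_ge a b with h | h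
  · exact useq_not_mem b (hab ▸ chain_mono h (useq_mem a))
  · have h' : b < a := by omega
    exact useq_not_mem a (hab.symm ▸ chain_mono h' (useq_mem b))

theorem useq_sum_ne_zero (J : Finset ℕ) (hJ : J.Nonempty) : ∑ i ∈ J, (useq i : G) ≠ 0 := by
  classical
  set M := J.max' hJ + 1 with hM
  have himg : J.image useq ⊆ (chain M : {s : Finset G // GoodF s}).1 := by
    intro y hy
    obtain ⟨i, hi, rfl⟩ := Finset.mem_image.mp hy
    exact chain_mono (by
      have := Finset.le_max' J i hi
      omega) (useq_mem i)
  have himgsum : ∑ y ∈ J.image useq, (y : G) = ∑ i ∈ J, useq i :=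
    Finset.sum_image (fun a _ b _ h => useq_inj h)
  rw [← himgsum]
  exact (chain M).2 _ himg (hJ.image useq)

theorem fs_rep_aux : ∀ {s : Stream' G} {x : G}, x ∈ Hindman.FS s →
    ∀ (a : Stream' G) (m : ℕ), s = a.drop m →
    ∃ J : Finset ℕ, J.Nonempty ∧ (∀ i ∈ J, m ≤ i) ∧ x = ∑ i ∈ J, a.get i := by
  intro s x h
  induction h with
  | head' s =>
    intro a m hm
    refine ⟨{m}, Finset.singleton_nonempty m, by simp, ?_⟩
    rw [hm, Stream'.head_drop, Finset.sum_singleton]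
  | tail' s y h ih =>
    intro a m hm
    have htl : s.tail = a.drop (m+1) := by
      rw [hm, Stream'.tail_eq_drop, Stream'.drop_drop, Nat.add_comm]
    obtain ⟨J, h1, h2, h3⟩ := ih a (m+1) htl
    exact ⟨J, h1, fun i hi => (Nat.le_succ m).trans (h2 i hi), h3⟩
  | cons' s y h ih =>
    intro a m hm
    have htl : s.tail = a.drop (m+1) := by
      rw [hm, Stream'.tail_eq_drop, Stream'.drop_drop, Nat.add_comm]
    obtain ⟨J, h1, h2, h3⟩ := ih a (m+1) htl
    have hmJ : m ∉ J := fun hmem => by have := h2 m hmem; omega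
    refine ⟨insert m J, Finset.insert_nonempty _ _, ?_, ?_⟩
    · intro i hi
      rcases Finset.mem_insert.mp hi with rfl | hi
      · exact Nat.le_refl _
      · exact (Nat.le_succ m).trans (h2 i hi)
    · rw [Finset.sum_insert hmJ, ← h3, hm, Stream'.head_drop]

theorem fs_rep {a : Stream' G} {x : G} (h : x ∈ Hindman.FS a) :
    ∃ J : Finset ℕ, J.Nonempty ∧ x = ∑ i ∈ J, a.get i := by
  obtain ⟨J, h1, _, h3⟩ := fs_rep_aux h a 0 rfl
  exact ⟨J, h1, h3⟩

theorem hindman_strong (a : Stream' G) (s : Set (Set G)) (hfin : s.Finite)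
    (hcov : Hindman.FS a ⊆ ⋃₀ s) :
    ∃ c ∈ s, ∃ b : Stream' G, Hindman.FS b ⊆ c ∩ Hindman.FS a := by
  obtain ⟨U, hidem, hU⟩ := Hindman.exists_idempotent_ultrafilter_le_FS a
  obtain ⟨c, hcs, hc⟩ := (Ultrafilter.finite_sUnion_mem_iff hfin).mp
    (Filter.mem_of_superset hU hcov)
  exact ⟨c, hcs, Hindman.exists_FS_of_large U hidem (c ∩ Hindman.FS a)
    (Filter.inter_mem hc hU)⟩

/-- The key combinatorial lemma. -/
theorem key_comb {β : Type} (fam : Set β) (hfam : fam.Finite) (φ : β → G → G)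
    (hdeg : ∀ U, ∃ d, IsGPoly d (φ U))
    (hne : ∀ U ∈ fam, φ U 0 ≠ 0)
    (T : Set G) (hT : T.Finite)
    (hcov : ∀ y : G, (∀ U ∈ fam, φ U y ≠ 0) → y ∈ T) : False := by
  classical
  set u : Stream' G := useq with hu
  set S : Set (Set G) := insert T ((fun U => {y | φ U y = 0}) '' fam) with hS
  have hSfin : S.Finite := ((hfam.image _).insert _)
  have hcov2 : Hindman.FS u ⊆ ⋃₀ S := by
    intro y _
    by_cases hy : ∀ U ∈ fam, φ U y ≠ 0
    · exact ⟨T, Set.mem_insert _ _, hcov y hy⟩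
    · push_neg at hy
      obtain ⟨U, hU, hUy⟩ := hy
      exact ⟨{y' | φ U y' = 0}, Set.mem_insert_of_mem _ ⟨U, hU, rfl⟩, hUy⟩
  obtain ⟨c, hcS, b, hb⟩ := hindman_strong u S hSfin hcov2
  rcases Set.mem_insert_iff.mp hcS with rfl | ⟨U, hUf, rfl⟩
  · -- FS b lands in the finite set T
    have hfinFS : (Hindman.FS b).Finite :=
      hT.subset (hb.trans Set.inter_subset_left)
    set P : ℕ → G := fun r => ∑ i ∈ Finset.range (r+1), b.get i with hP
    have hPmem : ∀ r, P r ∈ Hindman.FS b := fun r =>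
      Hindman.FS.finset_sum b (Finset.range (r+1))
        (Finset.nonempty_range_iff.mpr (Nat.succ_ne_zero r))
    have hninj : ¬ Function.Injective P := by
      intro hinj
      exact (Set.infinite_of_injective_forall_mem hinj hPmem) hfinFS
    rw [Function.not_injective_iff] at hninj
    obtain ⟨r, r', hPP, hne'⟩ := hninj
    have key : ∀ r r' : ℕ, r < r' → P r = P r' → False := by
      intro r r' hlt hPP
      have hsplit : P r + ∑ i ∈ Finset.Ico (r+1) (r'+1), b.get i = P r' := by
        rw [hP]
        dsimp only
        rw [Finset.range_eq_Ico, Finset.range_eq_Ico]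
        exact Finset.sum_Ico_consecutive b.get (m := 0) (n := r+1) (k := r'+1) (by omega) (by omega)
      have h0 : ∑ i ∈ Finset.Ico (r+1) (r'+1), b.get i = 0 := by
        have h1 : ∑ i ∈ Finset.Ico (r+1) (r'+1), b.get i = P r' - P r :=
          eq_sub_of_add_eq' hsplit
        rw [h1, ← hPP, sub_self]
      have hmem : (0 : G) ∈ Hindman.FS b := by
        rw [← h0]
        exact Hindman.FS.finset_sum b _ (by rw [Finset.nonempty_Ico]; omega)
      have hmemu : (0 : G) ∈ Hindman.FS u := (hb hmem).2
      obtain ⟨J, hJne, hJ⟩ := fs_rep hmemu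
      exact useq_sum_ne_zero J hJne hJ.symm
    rcases hne'.lt_or_gt with h | h
    · exact key r r' h hPP
    · exact key r' r h hPP.symm
  · obtain ⟨d, hd⟩ := hdeg U
    have hvan : ∀ S' : Finset ℕ, S'.Nonempty → S' ⊆ Finset.range (d+1) →
        φ U ((0:G) + ∑ i ∈ S', b.get i) = 0 := by
      intro S' h1 h2
      rw [zero_add]
      exact (hb (Hindman.FS.finset_sum b S' h1)).1
    exact hne U hUf (hd.eq_zero_of_subset_sums 0 b.get hvan)

end Stream

/-- The Key Theorem: if `K` is an infinite polyring, `n ≥ 1`, and `A ⊆ Kⁿ` is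
finite-valued (for some coordinate `j`, all sections of `A` along `j` are
finite), then `A` has empty interior in the Zariski topology of `Kⁿ`. -/
theorem stmt_18 (K ι : Type) [AddCommGroup K] [Infinite K] (ar : ι → ℕ)
    (ops : ∀ i, (Fin (ar i) → K) → K) (hpoly : IsPolyring ops)
    (n : ℕ) (hn : 1 ≤ n) (A : Set (Fin n → K))
    (hA : ∃ j : Fin n, ∀ a : Fin n → K,
      {x : K | Function.update a j x ∈ A}.Finite) :
    @interior _ (zariskiTopology ops n) A = ∅ := by
  classical
  rw [Set.eq_empty_iff_forall_notMem]
  intro x hx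
  obtain ⟨j, hAj⟩ := hA
  letI t : TopologicalSpace (Fin n → K) := zariskiTopology ops n
  have hbasis := TopologicalSpace.isTopologicalBasis_of_subbasis
    (t := t) (s := {U | ∃ F : PTerm K ι ar n, U = {a | F.eval ops a = 0}ᶜ}) rfl
  obtain ⟨v, hv, hxv, hvsub⟩ := hbasis.exists_subset_of_mem_open hx isOpen_interior
  obtain ⟨f, ⟨hffin, hfsub⟩, rfl⟩ := hv
  have hvA : ⋂₀ f ⊆ A := hvsub.trans interior_subset
  have hne : Nonempty (PTerm K ι ar n) := ⟨PTerm.const 0⟩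
  choose! Fo hFo using fun U (hU : U ∈ f) => hfsub hU
  set φ : Set (Fin n → K) → K → K :=
    fun U y => (Fo U).eval ops (Function.update x j (x j + y)) with hφ
  have hφ0 : ∀ U ∈ f, φ U 0 ≠ 0 := by
    intro U hU h0
    have hxU : x ∈ U := Set.mem_sInter.mp hxv U hU
    rw [hFo U hU] at hxU
    apply hxU
    show (Fo U).eval ops x = 0
    rw [show x = Function.update x j (x j + 0) from by rw [add_zero, Function.update_eq_self]]
    exact h0
  have hφpoly : ∀ U, ∃ d, IsGPoly d (φ U) := by
    intro U
    obtain ⟨d, hd⟩ := exists_isGPoly_term hpoly (Fo U) x j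
    exact ⟨d, (hd.translate (x j)).congr fun y => by rw [add_comm]⟩
  have hT : {y : K | Function.update x j (x j + y) ∈ A}.Finite := by
    have h2 : {y : K | Function.update x j (x j + y) ∈ A}
        = (fun y => x j + y) ⁻¹' {z | Function.update x j z ∈ A} := rfl
    rw [h2]
    exact (hAj x).preimage fun a _ b _ h => by exact add_left_cancel h
  refine key_comb f hffin φ hφpoly hφ0 _ hT ?_
  intro y hy
  show Function.update x j (x j + y) ∈ A
  apply hvA
  intro U hU
  rw [hFo U hU]
  exact hy U hU
end
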